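/- arXiv:1102.0948 — 7 statements merged into one kernel-verified Lean document; each statement's English description precedes it below -/
import Mathlib

section
/- (Takagi factorization for symmetric states) A vector |φ⟩ ∈ H_n ⊗ H_n lies in the symmetric subspace S if and only if it admits a symmetric Schmidt decomposition |φ⟩ = Σ_{j=1}^n α_j |φ_j⟩⊗|φ_j⟩ with α_j ≥ 0 and {|φ_j⟩} an orthonormal basis of H_n. -/
open Matrix BigOperators
open scoped ComplexOrder

noncomputable section

/-- |φ⟩⟨φ| as a matrix. -/
def ketbra {n : ℕ} (φ : Fin n → ℂ) : Matrix (Fin n) (Fin n) ℂ :=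
  Matrix.vecMulVec φ (star φ)

/-- Quadratic form ⟨v|M|v⟩. -/
def qf {m : Type*} [Fintype m] (M : Matrix m m ℂ) (v : m → ℂ) : ℂ :=
  star v ⬝ᵥ M *ᵥ v

/-- Tensor (Kronecker) product of vectors |ψ⟩⊗|χ⟩. -/
def kron {n : ℕ} (ψ χ : Fin n → ℂ) : Fin n × Fin n → ℂ :=
  fun p => ψ p.1 * χ p.2

/-- Unit vector predicate. -/
def unitv {n : ℕ} (φ : Fin n → ℂ) : Prop := star φ ⬝ᵥ φ = 1

/-- Linear maps on L(H_n), represented as linear maps on n×n matrices. -/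
abbrev MatMap (n : ℕ) := Matrix (Fin n) (Fin n) ℂ →ₗ[ℂ] Matrix (Fin n) (Fin n) ℂ

/-- Choi matrix C_Λ = Σ_{i,j} |i⟩⟨j| ⊗ Λ(|i⟩⟨j|). -/
def choi {n : ℕ} (Λ : MatMap n) : Matrix (Fin n × Fin n) (Fin n × Fin n) ℂ :=
  Matrix.of fun p q => Λ (Matrix.single p.1 q.1 1) p.2 q.2

/-- Partial transpose on the first factor, i.e. (T ⊗ id_n)(M). -/
def ptA {n : ℕ} (M : Matrix (Fin n × Fin n) (Fin n × Fin n) ℂ) :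
    Matrix (Fin n × Fin n) (Fin n × Fin n) ℂ :=
  Matrix.of fun p q => M (q.1, p.2) (p.1, q.2)

/-- The flip (swap) operator F on H_n ⊗ H_n. -/
def flipOp (n : ℕ) : Matrix (Fin n × Fin n) (Fin n × Fin n) ℂ :=
  Matrix.of fun p q => if p.1 = q.2 ∧ p.2 = q.1 then 1 else 0

/-- Projection onto the symmetric subspace, P_S = (1/2)(I + F). -/
def Psym (n : ℕ) : Matrix (Fin n × Fin n) (Fin n × Fin n) ℂ :=
  (1/2 : ℂ) • (1 + flipOp n)

/-- Gate fidelity F_Λ(|φ⟩) = ⟨φ|Λ(|φ⟩⟨φ|)|φ⟩. -/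
def fid {n : ℕ} (Λ : MatMap n) (φ : Fin n → ℂ) : ℂ := qf (Λ (ketbra φ)) φ

/-- Trace preserving. -/
def IsTP {n : ℕ} (Λ : MatMap n) : Prop := ∀ X, (Λ X).trace = X.trace

/-- Completely positive (via Choi's theorem: Choi matrix PSD). -/
def IsCP {n : ℕ} (Λ : MatMap n) : Prop := (choi Λ).PosSemidef

/-- Quantum channel: completely positive and trace preserving. -/
def IsChannel {n : ℕ} (Λ : MatMap n) : Prop := IsCP Λ ∧ IsTP Λ

/-- Λd is the Hilbert–Schmidt dual of Λ : Tr(Λ(X)Y) = Tr(X Λd(Y)). -/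
def IsDual {n : ℕ} (Λ Λd : MatMap n) : Prop :=
  ∀ X Y, (Λ X * Y).trace = (X * Λd Y).trace

/-- Standard basis vector. -/
def stdV (n : ℕ) (i : Fin n) : Fin n → ℂ := Pi.single i 1

/-- The symmetric subspace S = span{|i⟩|j⟩ + |j⟩|i⟩}. -/
def Ssub (n : ℕ) : Submodule ℂ (Fin n × Fin n → ℂ) :=
  Submodule.span ℂ {v | ∃ i j, v = kron (stdV n i) (stdV n j) + kron (stdV n j) (stdV n i)}

/-- The maximally entangled state |ψ₊⟩ = (1/√n) Σ_j |jj⟩. -/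
def psiPlus (n : ℕ) : Fin n × Fin n → ℂ :=
  fun p => if p.1 = p.2 then ((Real.sqrt n : ℂ))⁻¹ else 0

private lemma flip_mulVec {n : ℕ} (φ : Fin n × Fin n → ℂ) (p : Fin n × Fin n) :
    (flipOp n *ᵥ φ) p = φ (p.2, p.1) := by
  classical
  show (∑ q : Fin n × Fin n, (if p.1 = q.2 ∧ p.2 = q.1 then (1:ℂ) else 0) * φ q) = φ (p.2, p.1)
  rw [Finset.sum_eq_single (p.2, p.1)]
  · simp
  · rintro ⟨q1, q2⟩ _ hq
    have : ¬(p.1 = q2 ∧ p.2 = q1) := by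
      rintro ⟨h1, h2⟩
      exact hq (by rw [← h1, ← h2])
    simp [this]
  · intro h; exact absurd (Finset.mem_univ _) h


open Module in
private lemma takagi_aux : ∀ (d : ℕ) (E : Type) [NormedAddCommGroup E]
    [InnerProductSpace ℂ E] [FiniteDimensional ℂ E],
    Module.finrank ℂ E = d → ∀ (T : E →ₗ[ℝ] E),
    (∀ x y : E, (inner ℂ (T x) y : ℂ).re = (inner ℂ x (T y) : ℂ).re) →
    (∀ x : E, T (Complex.I • x) = -(Complex.I • T x)) →
    ∃ (u : Fin d → E) (α : Fin d → ℝ),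
      Orthonormal ℂ u ∧ (∀ j, 0 ≤ α j) ∧ ∀ j, T (u j) = (α j : ℂ) • u j := by
  intro d
  induction d with
  | zero =>
    intro E _ _ _ hd T hsym hanti
    exact ⟨fun i => i.elim0, fun i => i.elim0,
      orthonormal_iff_ite.mpr (fun i => i.elim0), fun i => i.elim0, fun i => i.elim0⟩
  | succ d ih =>
    intro E _ _ _ hd T hsym hanti
    letI : InnerProductSpace ℝ E := InnerProductSpace.complexToReal
    have hT : LinearMap.IsSymmetric (𝕜 := ℝ) T := fun x y => hsym x y
    have hfr : Module.finrank ℝ E = 2 * (d + 1) := by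
      rw [← Module.finrank_mul_finrank ℝ ℂ E, Complex.finrank_real_complex, hd]
    have hEig := hT.apply_eigenvectorBasis hfr ⟨0, by omega⟩
    have hnrm : ‖hT.eigenvectorBasis hfr ⟨0, by omega⟩‖ = 1 :=
      (hT.eigenvectorBasis hfr).orthonormal.1 _
    obtain ⟨v, lam, hlam, hv1, hTv⟩ :
        ∃ (v : E) (lam : ℝ), 0 ≤ lam ∧ ‖v‖ = 1 ∧ T v = (lam : ℂ) • v := by
      set v₀ := hT.eigenvectorBasis hfr ⟨0, by omega⟩ with hv₀
      set l := hT.eigenvalues hfr ⟨0, by omega⟩ with hl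
      have hEig' : T v₀ = (l : ℂ) • v₀ := by
        rw [Complex.coe_smul]; exact hEig
      rcases le_or_gt 0 l with h | h
      · exact ⟨v₀, l, h, hnrm, hEig'⟩
      · refine ⟨Complex.I • v₀, -l, by linarith, ?_, ?_⟩
        · rw [norm_smul, Complex.norm_I, one_mul]; exact hnrm
        · rw [hanti, hEig', smul_comm, Complex.ofReal_neg, neg_smul]
    have hv0 : v ≠ 0 := by
      intro h; rw [h, norm_zero] at hv1; norm_num at hv1
    set K := (ℂ ∙ v)ᗮ with hKdef
    have hmem : ∀ x : E, x ∈ K ↔ (inner ℂ v x : ℂ) = 0 := fun x =>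
      Submodule.mem_orthogonal_singleton_iff_inner_right
    have hinv : ∀ x, x ∈ K → T x ∈ K := by
      intro x hx
      rw [hmem] at hx ⊢
      have hre : (inner ℂ v (T x) : ℂ).re = 0 := by
        have h := hsym v x
        rw [hTv, inner_smul_left, hx, mul_zero] at h
        simpa using h.symm
      have him : (inner ℂ v (T x) : ℂ).im = 0 := by
        have h := hsym v (Complex.I • x)
        rw [hTv, inner_smul_left, inner_smul_right, hx, mul_zero, mul_zero] at h
        rw [hanti x, inner_neg_right, inner_smul_right] at h
        have h' := h.symm
        simpa [Complex.mul_re] using h'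
      exact Complex.ext hre him
    have hKd : Module.finrank ℂ K = d := by
      have h1 : finrank ℂ (ℂ ∙ v : Submodule ℂ E) + finrank ℂ K = finrank ℂ E :=
        Submodule.finrank_add_finrank_orthogonal (ℂ ∙ v)
      rw [finrank_span_singleton hv0, hd] at h1
      omega
    let T' : K →ₗ[ℝ] K :=
      { toFun := fun x => ⟨T x.1, hinv x.1 x.2⟩
        map_add' := fun a b => Subtype.ext (by simp)
        map_smul' := fun r a => Subtype.ext (by
          show T ((r • a : K) : E) = ((r • (⟨T a.1, hinv a.1 a.2⟩ : K) : K) : E)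
          rw [SetLike.val_smul_of_tower, SetLike.val_smul_of_tower, LinearMap.map_smul]) }
    obtain ⟨u', α', honb', h0', hT'⟩ := ih K hKd T'
      (fun x y => hsym x.1 y.1)
      (fun x => Subtype.ext (by
        show T ((Complex.I • x : K) : E) = ((-(Complex.I • T' x) : K) : E)
        rw [Submodule.coe_smul]
        rw [hanti]
        rfl))
    refine ⟨Fin.cons v (fun j => (u' j : E)), Fin.cons lam α', ?_, ?_, ?_⟩
    · rw [orthonormal_iff_ite]
      intro i j
      induction i using Fin.cases with
      | zero =>
        induction j using Fin.cases with
        | zero => simp [inner_self_eq_norm_sq_to_K, hv1]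
        | succ j =>
          rw [if_neg (Ne.symm (Fin.succ_ne_zero j))]
          simpa [Fin.cons_zero, Fin.cons_succ] using (hmem _).mp (u' j).2
      | succ i =>
        induction j using Fin.cases with
        | zero =>
          rw [if_neg (Fin.succ_ne_zero i)]
          have := (hmem _).mp (u' i).2
          rw [Fin.cons_succ, Fin.cons_zero]
          rw [← inner_conj_symm, this, map_zero]
        | succ j =>
          rw [Fin.cons_succ, Fin.cons_succ]
          have := orthonormal_iff_ite.mp honb' i j
          simpa [Fin.succ_inj, Submodule.coe_inner] using this
    · intro j
      induction j using Fin.cases with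
      | zero => simpa using hlam
      | succ j => simpa using h0' j
    · intro j
      induction j using Fin.cases with
      | zero => simpa using hTv
      | succ j =>
        rw [Fin.cons_succ, Fin.cons_succ]
        have := congrArg (Subtype.val) (hT' j)
        simpa [T'] using this

theorem stmt4 {n : ℕ} (φ : Fin n × Fin n → ℂ) :
    flipOp n *ᵥ φ = φ ↔
    ∃ (α : Fin n → ℝ) (u : Fin n → Fin n → ℂ),
      (∀ j, 0 ≤ α j) ∧
      (∀ i j, star (u i) ⬝ᵥ u j = if i = j then (1 : ℂ) else 0) ∧
      φ = ∑ j, (α j : ℂ) • kron (u j) (u j) := by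
  constructor
  · intro hflip
    have hsymφ : ∀ p : Fin n × Fin n, φ (p.2, p.1) = φ p := by
      intro p; rw [← flip_mulVec φ p, hflip]
    set A : Matrix (Fin n) (Fin n) ℂ := Matrix.of (fun i j => φ (i, j)) with hAdef
    have hA : ∀ i j, A j i = A i j := fun i j => hsymφ (i, j)
    let T : EuclideanSpace ℂ (Fin n) →ₗ[ℝ] EuclideanSpace ℂ (Fin n) :=
      { toFun := fun x => WithLp.toLp 2 (A *ᵥ (fun i => (starRingEnd ℂ) (x i)))
        map_add' := fun x y => by
          have h : (fun i => (starRingEnd ℂ) ((x + y) i)) =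
              (fun i => (starRingEnd ℂ) (x i)) + (fun i => (starRingEnd ℂ) (y i)) := by
            funext i; simp
          show WithLp.toLp 2 (A *ᵥ _) = _
          rw [h, Matrix.mulVec_add, WithLp.toLp_add]
        map_smul' := fun r x => by
          have h : (fun i => (starRingEnd ℂ) ((r • x) i)) =
              (r : ℂ) • (fun i => (starRingEnd ℂ) (x i)) := by
            funext i
            simp [Complex.real_smul]
          show WithLp.toLp 2 (A *ᵥ _) = _
          rw [h, Matrix.mulVec_smul]
          ext i
          simp [Complex.real_smul] }
    have hTx : ∀ z : EuclideanSpace ℂ (Fin n),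
        T z = WithLp.toLp 2 (A *ᵥ (fun i => (starRingEnd ℂ) (z i))) := fun _ => rfl
    have key : ∀ x y : EuclideanSpace ℂ (Fin n), (inner ℂ (T x) y : ℂ) = inner ℂ (T y) x := by
      intro x y
      rw [hTx, hTx]
      simp only [PiLp.inner_apply, WithLp.ofLp_toLp, RCLike.inner_apply, Matrix.mulVec, dotProduct,
        map_sum, _root_.map_mul, RingHomCompTriple.comp_apply, Complex.conj_conj, RingHom.id_apply, Finset.sum_mul]
      simp only [Finset.mul_sum]
      rw [Finset.sum_comm]
      refine Finset.sum_congr rfl fun a _ => Finset.sum_congr rfl fun b _ => ?_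
      rw [hA a b]
      ring
    have hsymT : ∀ x y : EuclideanSpace ℂ (Fin n),
        (inner ℂ (T x) y : ℂ).re = (inner ℂ x (T y) : ℂ).re := by
      intro x y
      rw [key x y, ← inner_conj_symm x (T y)]
      exact (Complex.conj_re _).symm
    have hantiT : ∀ x : EuclideanSpace ℂ (Fin n),
        T (Complex.I • x) = -(Complex.I • T x) := by
      intro x
      rw [hTx, hTx]
      have h : (fun i => (starRingEnd ℂ) ((Complex.I • x) i)) =
          (-Complex.I) • fun i => (starRingEnd ℂ) (x i) := by
        funext i
        simp
      rw [h, Matrix.mulVec_smul]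
      ext i
      simp
    obtain ⟨u, α, honb, h0, hTu⟩ := takagi_aux n (EuclideanSpace ℂ (Fin n))
      finrank_euclideanSpace_fin T hsymT hantiT
    let u' : Fin n → Fin n → ℂ := fun j i => u j i
    refine ⟨α, u', h0, ?_, ?_⟩
    · intro i j
      have h := orthonormal_iff_ite.mp honb i j
      simpa [PiLp.inner_apply, RCLike.inner_apply, dotProduct, u', mul_comm] using h
    · have hcol : ∀ j i, (A *ᵥ (fun k => (starRingEnd ℂ) (u' j k))) i = (α j : ℂ) * u' j i := by
        intro j i
        have h := congrArg (fun w : EuclideanSpace ℂ (Fin n) => w i) ((hTx (u j)).symm.trans (hTu j))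
        simpa [u'] using h
      let U : Matrix (Fin n) (Fin n) ℂ := Matrix.of (fun i j => u' j i)
      have hU1 : U.conjTranspose * U = 1 := by
        ext i j
        have h := orthonormal_iff_ite.mp honb i j
        simp only [Matrix.mul_apply, Matrix.conjTranspose_apply, Matrix.of_apply,
          Matrix.one_apply, U]
        simpa [PiLp.inner_apply, RCLike.inner_apply, u', mul_comm] using h
      have hU2 : U * U.conjTranspose = 1 := mul_eq_one_comm.mp hU1
      have hU3 : (U.map (starRingEnd ℂ)) * U.transpose = 1 := by
        have h : U.transpose = U.conjTranspose.map (starRingEnd ℂ) := by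
          ext i j; simp [Matrix.conjTranspose_apply]
        rw [h, ← Matrix.map_mul, hU2, Matrix.map_one (starRingEnd ℂ) (map_zero _) (map_one _)]
      have hAU : A * U.map (starRingEnd ℂ) = U * Matrix.diagonal (fun j => (α j : ℂ)) := by
        ext i j
        rw [Matrix.mul_diagonal]
        simp only [Matrix.mul_apply, Matrix.map_apply, Matrix.of_apply, U]
        rw [show (∑ k, A i k * (starRingEnd ℂ) (u' j k)) = (α j : ℂ) * u' j i from by
          simpa [Matrix.mulVec, dotProduct] using hcol j i]
        ring
      have hA2 : A = U * (Matrix.diagonal (fun j => (α j : ℂ)) * U.transpose) := by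
        calc A = A * ((U.map (starRingEnd ℂ)) * U.transpose) := by rw [hU3, Matrix.mul_one]
        _ = (A * U.map (starRingEnd ℂ)) * U.transpose := by rw [Matrix.mul_assoc]
        _ = _ := by rw [hAU, Matrix.mul_assoc]
      funext p
      have hp : φ p = A p.1 p.2 := rfl
      rw [hp, hA2]
      simp only [Matrix.mul_apply, Matrix.transpose_apply, Matrix.of_apply, U,
        Matrix.diagonal_apply, ite_mul, zero_mul, Finset.sum_ite_eq, Finset.mem_univ, if_true]
      rw [Finset.sum_apply]
      refine Finset.sum_congr rfl fun j _ => ?_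
      simp only [Pi.smul_apply, smul_eq_mul, kron]
      ring
  · rintro ⟨α, u, h0, hon, hφ⟩
    funext p
    rw [flip_mulVec, hφ, Finset.sum_apply, Finset.sum_apply]
    refine Finset.sum_congr rfl fun j _ => ?_
    simp only [Pi.smul_apply, smul_eq_mul, kron]
    ring
end
end

section
/- Let E: L(H_n) → L(H_n) be a quantum channel. Then the average gate fidelity satisfies F̄_E = (2/(n(n+1))) Tr(P_S (T ⊗ id_n)(C_E) P_S), where P_S is the projection onto the symmetric subspace of H_n ⊗ H_n. -/
open Matrix BigOperators
open scoped ComplexOrder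

noncomputable section

lemma flip_sq (n : ℕ) : flipOp n * flipOp n = 1 := by
  ext p q
  simp only [flipOp, Matrix.mul_apply, Matrix.of_apply]
  rw [Finset.sum_eq_single (p.2, p.1)]
  · simp [Matrix.one_apply, Prod.ext_iff, eq_comm, and_comm]
  · intro b _ hb
    rcases p with ⟨p1, p2⟩
    simp only [Matrix.of_apply]
    by_cases h : p1 = b.2 ∧ p2 = b.1
    · exfalso; apply hb; ext <;> simp [h.1.symm, h.2.symm]
    · simp [h]
  · simp

lemma mul_flip_apply {n : ℕ} (M : Matrix (Fin n × Fin n) (Fin n × Fin n) ℂ)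
    (p q : Fin n × Fin n) : (M * flipOp n) p q = M p (q.2, q.1) := by
  simp only [Matrix.mul_apply, flipOp, Matrix.of_apply]
  rw [Finset.sum_eq_single (q.2, q.1)]
  · simp
  · intro b _ hb
    have : ¬ (b.1 = q.2 ∧ b.2 = q.1) := by
      intro h; apply hb; ext <;> simp [h.1, h.2]
    simp [this]
  · simp

lemma psym_idem (n : ℕ) : Psym n * Psym n = Psym n := by
  simp only [Psym, Matrix.smul_mul, Matrix.mul_smul, add_mul, mul_add, one_mul, mul_one,
    flip_sq, smul_smul]
  ext p q
  simp only [Matrix.smul_apply, Matrix.add_apply, smul_eq_mul]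
  ring

lemma sum_std_diag (n : ℕ) : ∑ i : Fin n, Matrix.single i i (1 : ℂ) = 1 := by
  ext a b
  simp only [Matrix.sum_apply, Matrix.single, Matrix.one_apply, Matrix.of_apply]
  by_cases h : a = b
  · subst h
    rw [Finset.sum_eq_single a]
    · simp
    · intro i _ hi; simp [hi]
    · simp
  · rw [if_neg h, Finset.sum_eq_zero]
    intro i _
    by_cases hia : i = a
    · subst hia; simp [h]
    · simp [hia]

lemma mul_std_mul {n : ℕ} (A B : Matrix (Fin n) (Fin n) ℂ) (j i x y : Fin n) :
    (A * Matrix.single j i (1 : ℂ) * B) x y = A x j * B i y := by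
  simp only [Matrix.mul_apply, Matrix.single, Matrix.of_apply, Finset.sum_mul]
  rw [Finset.sum_eq_single i]
  · congr 1
    rw [Finset.sum_eq_single j] <;> simp +contextual [eq_comm]
  · intro b _ hb
    rw [Finset.sum_eq_zero]
    intro c _
    simp [Ne.symm hb]
  · simp

theorem stmt6 {n : ℕ} {ι : Type*} [Fintype ι]
    (E : MatMap n) (K : ι → Matrix (Fin n) (Fin n) ℂ)
    (hK : ∀ X, E X = ∑ i, K i * X * (K i)ᴴ)
    (hsum : ∑ i, (K i)ᴴ * K i = 1) :
    ((n : ℂ) + ∑ i, (Complex.normSq ((K i).trace) : ℂ)) / ((n : ℂ) * ((n : ℂ) + 1)) =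
      (2 / ((n : ℂ) * ((n : ℂ) + 1))) * (Psym n * ptA (choi E) * Psym n).trace := by
  set M := ptA (choi E) with hM
  have htr : (Psym n * M * Psym n).trace = (M * Psym n).trace := by
    rw [Matrix.trace_mul_cycle, psym_idem, Matrix.trace_mul_comm]
  -- trace of M
  have htrM : M.trace = (n : ℂ) := by
    have : M.trace = ∑ i : Fin n, (E (Matrix.single i i 1)).trace := by
      simp only [hM, Matrix.trace, Matrix.diag, ptA, choi, Matrix.of_apply]
      rw [Fintype.sum_prod_type]
    rw [this]
    have h2 : ∑ i : Fin n, (E (Matrix.single i i 1)).trace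
        = (E (1 : Matrix (Fin n) (Fin n) ℂ)).trace := by
      rw [← sum_std_diag n, map_sum, Matrix.trace_sum]
    rw [h2, hK, Matrix.trace_sum]
    have : ∀ i : ι, (K i * 1 * (K i)ᴴ).trace = ((K i)ᴴ * K i).trace := by
      intro i; rw [mul_one, Matrix.trace_mul_comm]
    simp_rw [this]
    rw [← Matrix.trace_sum, hsum, Matrix.trace_one]
    simp
  -- trace of M * flip
  have htrMF : (M * flipOp n).trace = ∑ i, (Complex.normSq ((K i).trace) : ℂ) := by
    have h1 : (M * flipOp n).trace = ∑ p : Fin n × Fin n, M p (p.2, p.1) := by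
      simp only [Matrix.trace, Matrix.diag]
      congr 1; ext p; exact mul_flip_apply M p p
    rw [h1]
    have h2 : ∀ p : Fin n × Fin n, M p (p.2, p.1)
        = ∑ a : ι, K a p.2 p.2 * star (K a p.1 p.1) := by
      intro p
      simp only [hM, ptA, choi, Matrix.of_apply, hK, Matrix.sum_apply]
      congr 1; ext a
      rw [mul_std_mul]
      simp [Matrix.conjTranspose_apply]
    simp_rw [h2]
    rw [Finset.sum_comm]
    congr 1; ext a
    have h3 : ∑ p : Fin n × Fin n, K a p.2 p.2 * star (K a p.1 p.1)
        = (∑ i, K a i i) * (∑ i, star (K a i i)) := by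
      rw [Fintype.sum_prod_type]
      simp_rw [← Finset.sum_mul]
      rw [← Finset.mul_sum, mul_comm]
    rw [h3, ← Complex.mul_conj]
    simp [Matrix.trace, Matrix.diag, map_sum, Complex.star_def]
  have hmain : (M * Psym n).trace
      = (1/2 : ℂ) * ((n : ℂ) + ∑ i, (Complex.normSq ((K i).trace) : ℂ)) := by
    rw [Psym, Matrix.mul_smul, Matrix.trace_smul, mul_add, Matrix.trace_add, mul_one,
      htrM, htrMF, smul_eq_mul]
  rw [htr, hmain]
  ring
end
end

section
/- Let D be a Hermitian operator on H_n ⊗ H_n such that ⟨φφ|D|φφ⟩ = 0 for all unit vectors |φ⟩ ∈ H_n. Then ⟨φφ|D|ψψ⟩ = 0 for all |φ⟩, |ψ⟩ ∈ H_n. -/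
open Matrix BigOperators
open scoped ComplexOrder

noncomputable section

lemma kron_smul_self {n : ℕ} (c : ℂ) (φ : Fin n → ℂ) :
    kron (c • φ) (c • φ) = (c * c) • kron φ φ := by
  funext p; simp [kron, smul_eq_mul]; ring

lemma qf_smul {m : Type*} [Fintype m] (M : Matrix m m ℂ) (c : ℂ) (v : m → ℂ) :
    qf M (c • v) = star c * c * qf M v := by
  simp [qf, star_smul, smul_dotProduct, dotProduct_smul,
    Matrix.mulVec_smul, smul_eq_mul]
  ring

lemma qf_kron_all {n : ℕ} (D : Matrix (Fin n × Fin n) (Fin n × Fin n) ℂ)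
    (h : ∀ φ : Fin n → ℂ, unitv φ → qf D (kron φ φ) = 0) (φ : Fin n → ℂ) :
    qf D (kron φ φ) = 0 := by
  by_cases hφ : φ = 0
  · subst hφ
    simp [qf, kron, dotProduct]
  · set N : ℝ := ∑ i, Complex.normSq (φ i) with hN
    have hNpos : 0 < N := by
      rcases Function.ne_iff.mp hφ with ⟨i, hi⟩
      exact Finset.sum_pos' (fun j _ => Complex.normSq_nonneg _)
        ⟨i, Finset.mem_univ i, Complex.normSq_pos.mpr hi⟩
    set r : ℝ := (Real.sqrt N)⁻¹ with hr
    have hrpos : 0 < r := by positivity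
    have hdot : star φ ⬝ᵥ φ = (N : ℂ) := by
      simp [dotProduct, hN, Complex.normSq_eq_conj_mul_self]
    have hunit : unitv ((r : ℂ) • φ) := by
      unfold unitv
      have e : star ((r:ℂ) • φ) ⬝ᵥ ((r:ℂ) • φ)
          = (starRingEnd ℂ (r:ℂ)) * ((r:ℂ) * (star φ ⬝ᵥ φ)) := by
        simp [star_smul, smul_dotProduct, dotProduct_smul, smul_eq_mul, mul_assoc]
      rw [e, hdot, Complex.conj_ofReal]
      norm_cast
      rw [hr]
      field_simp
      rw [Real.sq_sqrt hNpos.le]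

    have h0 := h _ hunit
    rw [kron_smul_self, qf_smul] at h0
    have hne : ((r:ℂ) * r) ≠ 0 := by
      have : (r:ℂ) ≠ 0 := by exact_mod_cast hrpos.ne'
      exact mul_ne_zero this this
    have : star ((r:ℂ)*r) * ((r:ℂ)*r) ≠ 0 := mul_ne_zero (star_ne_zero.mpr hne) hne
    exact (mul_eq_zero.mp h0).resolve_left this

theorem stmt7 {n : ℕ} (D : Matrix (Fin n × Fin n) (Fin n × Fin n) ℂ)
    (hD : D.IsHermitian)
    (h : ∀ φ : Fin n → ℂ, unitv φ → qf D (kron φ φ) = 0) :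
    ∀ φ ψ : Fin n → ℂ, star (kron φ φ) ⬝ᵥ D *ᵥ kron ψ ψ = 0 := by
  intro φ ψ
  set a := kron φ φ with ha
  set c := kron ψ ψ with hc
  set b : Fin n × Fin n → ℂ := fun p => φ p.1 * ψ p.2 + ψ p.1 * φ p.2 with hb
  set B : (Fin n × Fin n → ℂ) → (Fin n × Fin n → ℂ) → ℂ :=
    fun x y => star x ⬝ᵥ D *ᵥ y with hB
  show B a c = 0
  have hA : B a a = 0 := qf_kron_all D h φ
  have hC : B c c = 0 := qf_kron_all D h ψ
  have key : ∀ t : ℂ,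
      B a a + t * B a b + (t*t) * B a c + star t * B b a + (star t * t) * B b b
      + (star t * (t*t)) * B b c + (star t * star t) * B c a
      + (star t * star t * t) * B c b + (star t * star t * (t*t)) * B c c = 0 := by
    intro t
    have h0 := qf_kron_all D h (φ + t • ψ)
    have hk : kron (φ + t • ψ) (φ + t • ψ) = a + t • b + (t*t) • c := by
      funext p
      simp [kron, ha, hc, hb, smul_eq_mul]
      ring
    rw [qf, hk] at h0
    simp only [star_add, star_smul, add_dotProduct, smul_dotProduct,
      Matrix.mulVec_add, Matrix.mulVec_smul, dotProduct_add, dotProduct_smul,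
      smul_eq_mul, star_mul'] at h0
    rw [hB]
    linear_combination h0
  have k1 := key 1
  have k2 := key (-1)
  have k3 := key Complex.I
  have k4 := key (-Complex.I)
  have k5 := key (1 + Complex.I)
  have k6 := key (-(1 + Complex.I))
  simp only [star_one, star_neg, Complex.star_def, Complex.conj_I, map_add, _root_.map_one] at k1 k2 k3 k4 k5 k6
  linear_combination ((1+Complex.I)/8)*(k1+k2) + ((-1+Complex.I)/8)*(k3+k4)
    + (-Complex.I/8)*(k5+k6) + (-Complex.I/4)*hA + (Complex.I/2)*hC
    + ((3/4)*B a c - (1/4)*B b b - (1/4)*B c a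
       - ((1 - Complex.I*Complex.I + 2*Complex.I)/4)*B c c)*Complex.I_mul_I
end
end

section
/- Let Q, R: L(H_n) → L(H_n) be linear maps. Then F_Q = F_R (i.e., ⟨φ|Q(|φ⟩⟨φ|)|φ⟩ = ⟨φ|R(|φ⟩⟨φ|)|φ⟩ for all unit |φ⟩ ∈ H_n) if and only if P_S (T ⊗ id_n)(C_Q) P_S = P_S (T ⊗ id_n)(C_R) P_S. -/
open Matrix BigOperators
open scoped ComplexOrder

noncomputable section

namespace Stmt9Aux

/-- The sesquilinear form associated to a matrix. -/
def Bf {m : Type*} [Fintype m] (D : Matrix m m ℂ) (u v : m → ℂ) : ℂ := star u ⬝ᵥ D *ᵥ v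

section Bform
variable {m : Type*} [Fintype m] (D : Matrix m m ℂ)

lemma Bf_add_left (u u' v : m → ℂ) : Bf D (u + u') v = Bf D u v + Bf D u' v := by
  simp only [Bf, star_add, add_dotProduct]

lemma Bf_add_right (u v v' : m → ℂ) : Bf D u (v + v') = Bf D u v + Bf D u v' := by
  simp only [Bf, mulVec_add, dotProduct_add]

lemma Bf_smul_left (s : ℂ) (u v : m → ℂ) : Bf D (s • u) v = (starRingEnd ℂ) s * Bf D u v := by
  simp only [Bf, star_smul, smul_dotProduct, starRingEnd_apply, smul_eq_mul]

lemma Bf_smul_right (s : ℂ) (u v : m → ℂ) : Bf D u (s • v) = s * Bf D u v := by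
  simp only [Bf, mulVec_smul, dotProduct_smul, smul_eq_mul]

lemma Bf_sub (A B : Matrix m m ℂ) (u v : m → ℂ) :
    Bf (A - B) u v = Bf A u v - Bf B u v := by
  simp only [Bf, Matrix.sub_mulVec, dotProduct_sub]

lemma Bf_expand2 (X Y X' Y' : m → ℂ) (s : ℂ) :
    Bf D (X + s • Y) (X' + s • Y') =
      Bf D X X' + s * Bf D X Y' + (starRingEnd ℂ) s * Bf D Y X' +
        (starRingEnd ℂ) s * s * Bf D Y Y' := by
  simp only [Bf_add_left, Bf_add_right, Bf_smul_left, Bf_smul_right]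
  ring

lemma Bf_expand3 (X0 X1 X2 : m → ℂ) (s : ℂ) :
    Bf D (X0 + s • X1 + (s * s) • X2) (X0 + s • X1 + (s * s) • X2) =
      Bf D X0 X0 + s * Bf D X0 X1 + (s*s) * Bf D X0 X2 +
      (starRingEnd ℂ) s * Bf D X1 X0 + (starRingEnd ℂ) s * s * Bf D X1 X1 +
      (starRingEnd ℂ) s * (s*s) * Bf D X1 X2 +
      ((starRingEnd ℂ) s * (starRingEnd ℂ) s) * Bf D X2 X0 +
      ((starRingEnd ℂ) s * (starRingEnd ℂ) s) * s * Bf D X2 X1 +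
      ((starRingEnd ℂ) s * (starRingEnd ℂ) s) * (s*s) * Bf D X2 X2 := by
  simp only [Bf_add_left, Bf_add_right, Bf_smul_left, Bf_smul_right, _root_.map_mul]
  ring

lemma polar2 (X Y X' Y' : m → ℂ) (h : ∀ s : ℂ, Bf D (X + s • Y) (X' + s • Y') = 0) :
    Bf D X Y' = 0 := by
  have E : ∀ s : ℂ, Bf D X X' + s * Bf D X Y' + (starRingEnd ℂ) s * Bf D Y X' +
      (starRingEnd ℂ) s * s * Bf D Y Y' = 0 := fun s => (Bf_expand2 D X Y X' Y' s).symm.trans (h s)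
  have E1 := E 1; have Em1 := E (-1); have Ei := E Complex.I
  simp only [_root_.map_one, map_neg, Complex.conj_I] at E1 Em1 Ei
  linear_combination (1/4 + Complex.I/4) * E1 + (-1/4 + Complex.I/4) * Em1
    + (-Complex.I/2) * Ei
    - (-(1/2) * Bf D X Y' + (1/2) * Bf D Y X' + (Complex.I/2) * Bf D Y Y') * Complex.I_mul_I

lemma polar3 (X0 X1 X2 : m → ℂ)
    (h : ∀ s : ℂ, Bf D (X0 + s • X1 + (s * s) • X2) (X0 + s • X1 + (s * s) • X2) = 0) :
    Bf D X1 X1 = 0 := by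
  have E : ∀ s : ℂ, Bf D X0 X0 + s * Bf D X0 X1 + (s*s) * Bf D X0 X2 +
      (starRingEnd ℂ) s * Bf D X1 X0 + (starRingEnd ℂ) s * s * Bf D X1 X1 +
      (starRingEnd ℂ) s * (s*s) * Bf D X1 X2 +
      ((starRingEnd ℂ) s * (starRingEnd ℂ) s) * Bf D X2 X0 +
      ((starRingEnd ℂ) s * (starRingEnd ℂ) s) * s * Bf D X2 X1 +
      ((starRingEnd ℂ) s * (starRingEnd ℂ) s) * (s*s) * Bf D X2 X2 = 0 :=
    fun s => (Bf_expand3 D X0 X1 X2 s).symm.trans (h s)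
  have E0 := E 0; have E1 := E 1; have Em1 := E (-1); have E2 := E 2; have Em2 := E (-2)
  have Ei := E Complex.I; have Emi := E (-Complex.I)
  simp only [map_zero, _root_.map_one, map_neg, map_ofNat, Complex.conj_I] at E0 E1 Em1 E2 Em2 Ei Emi
  linear_combination (-5/4 : ℂ) * E0 + (5/12 : ℂ) * E1 + (5/12 : ℂ) * Em1
    + (-1/24 : ℂ) * E2 + (-1/24 : ℂ) * Em2 + (1/4 : ℂ) * Ei + (1/4 : ℂ) * Emi
    - ((1/2) * Bf D X0 X2 - (1/2) * Bf D X1 X1 + (1/2) * Bf D X2 X0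
        + ((Complex.I * Complex.I - 1)/2) * Bf D X2 X2) * Complex.I_mul_I

end Bform

variable {n : ℕ}

/- kron algebra -/
lemma kron_quad (a b : Fin n → ℂ) (s : ℂ) :
    kron (a + s • b) (a + s • b) =
      kron a a + s • (kron a b + kron b a) + (s * s) • kron b b := by
  funext p
  simp only [kron, Pi.add_apply, Pi.smul_apply, smul_eq_mul]
  ring

lemma sym_left (a c b : Fin n → ℂ) (s : ℂ) :
    kron (a + s • c) b + kron b (a + s • c) =
      (kron a b + kron b a) + s • (kron c b + kron b c) := by
  funext p
  simp only [kron, Pi.add_apply, Pi.smul_apply, smul_eq_mul]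
  ring

lemma sym_right (a b d : Fin n → ℂ) (s : ℂ) :
    kron a (b + s • d) + kron (b + s • d) a =
      (kron a b + kron b a) + s • (kron a d + kron d a) := by
  funext p
  simp only [kron, Pi.add_apply, Pi.smul_apply, smul_eq_mul]
  ring

lemma kron_smul_both (a b : Fin n → ℂ) (s : ℂ) :
    kron (s • a) (s • b) = (s * s) • kron a b := by
  funext p
  simp only [kron, Pi.smul_apply, smul_eq_mul]
  ring

lemma kron_single (i j : Fin n) :
    kron (Pi.single i (1:ℂ)) (Pi.single j (1:ℂ)) = Pi.single ((i, j) : Fin n × Fin n) 1 := by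
  funext p
  rcases p with ⟨p1, p2⟩
  by_cases h1 : p1 = i <;> by_cases h2 : p2 = j <;>
    simp [kron, Pi.single_apply, Prod.ext_iff, h1, h2]

/- flip / Psym matrix lemmas -/
lemma sum_flip_left (f : Fin n × Fin n → ℂ) (p : Fin n × Fin n) :
    ∑ r, (if p.1 = r.2 ∧ p.2 = r.1 then (1:ℂ) else 0) * f r = f (p.2, p.1) := by
  rw [Finset.sum_eq_single (p.2, p.1)]
  · simp
  · rintro r - hr
    rw [if_neg, zero_mul]
    rintro ⟨h1, h2⟩
    exact hr (by cases r; simp_all)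
  · simp

lemma sum_flip_right (f : Fin n × Fin n → ℂ) (q : Fin n × Fin n) :
    ∑ r, f r * (if r.1 = q.2 ∧ r.2 = q.1 then (1:ℂ) else 0) = f (q.2, q.1) := by
  rw [Finset.sum_eq_single (q.2, q.1)]
  · simp
  · rintro r - hr
    rw [if_neg, mul_zero]
    rintro ⟨h1, h2⟩
    exact hr (by cases r; simp_all)
  · simp

lemma flip_mul_apply (M : Matrix (Fin n × Fin n) (Fin n × Fin n) ℂ) (p q) :
    (flipOp n * M) p q = M (p.2, p.1) q := by
  rw [Matrix.mul_apply]
  exact sum_flip_left (fun r => M r q) p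

lemma mul_flip_apply (M : Matrix (Fin n × Fin n) (Fin n × Fin n) ℂ) (p q) :
    (M * flipOp n) p q = M p (q.2, q.1) := by
  rw [Matrix.mul_apply]
  exact sum_flip_right (fun r => M p r) q

lemma flip_mulVec (v : Fin n × Fin n → ℂ) (p) : (flipOp n *ᵥ v) p = v (p.2, p.1) := by
  rw [Matrix.mulVec]
  exact sum_flip_left v p

lemma Psym_mulVec_kron (φ : Fin n → ℂ) : Psym n *ᵥ kron φ φ = kron φ φ := by
  funext p
  simp only [Psym, Matrix.smul_mulVec, Matrix.add_mulVec, Matrix.one_mulVec,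
    Pi.smul_apply, Pi.add_apply, flip_mulVec, smul_eq_mul]
  simp only [kron]
  ring

lemma Psym_entry (M : Matrix (Fin n × Fin n) (Fin n × Fin n) ℂ) (p q) :
    (Psym n * M * Psym n) p q =
      (1/4 : ℂ) * (M p q + M (p.2, p.1) q + M p (q.2, q.1) + M (p.2, p.1) (q.2, q.1)) := by
  have h : Psym n * M * Psym n =
      (1/4 : ℂ) • (M + flipOp n * M + M * flipOp n + flipOp n * M * flipOp n) := by
    simp only [Psym, Matrix.smul_mul, Matrix.mul_smul, add_mul, mul_add, one_mul, mul_one,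
      smul_smul, smul_add]
    norm_num
    try abel
  rw [h]
  simp only [Matrix.smul_apply, Matrix.add_apply, smul_eq_mul, flip_mul_apply, mul_flip_apply]
  try ring

lemma Psym_transpose : (Psym n)ᵀ = Psym n := by
  ext p q
  simp only [Matrix.transpose_apply, Psym, Matrix.smul_apply, Matrix.add_apply,
    Matrix.one_apply, flipOp, Matrix.of_apply]
  have h1 : (q = p) = (p = q) := propext eq_comm
  have h2 : (q.1 = p.2 ∧ q.2 = p.1) = (p.1 = q.2 ∧ p.2 = q.1) :=
    propext (by constructor <;> rintro ⟨h, h'⟩ <;> exact ⟨h'.symm, h.symm⟩)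
  simp only [h1, h2]

lemma star_kron (φ : Fin n → ℂ) : star (kron φ φ) = kron (star φ) (star φ) := by
  funext p
  simp [kron, star_mul']

lemma star_kron_vecMul_Psym (φ : Fin n → ℂ) :
    star (kron φ φ) ᵥ* Psym n = star (kron φ φ) := by
  have h : star (kron φ φ) ᵥ* Psym n = (Psym n)ᵀ *ᵥ star (kron φ φ) := by
    rw [← Matrix.vecMul_transpose, Matrix.transpose_transpose]
  rw [h, Psym_transpose, star_kron, Psym_mulVec_kron]

/- basis entries -/
lemma Bf_single (D : Matrix (Fin n × Fin n) (Fin n × Fin n) ℂ) (p q : Fin n × Fin n) :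
    Bf D (Pi.single p 1) (Pi.single q 1) = D p q := by
  have hstar : star (Pi.single p 1 : Fin n × Fin n → ℂ) = Pi.single p 1 := by
    funext x
    by_cases h : x = p <;> simp [Pi.single_apply, h]
  rw [Bf, hstar]
  simp

/- fidelity identity -/
lemma ketbra_eq (φ : Fin n → ℂ) :
    ketbra φ = ∑ i, ∑ j, (φ i * (starRingEnd ℂ) (φ j)) • Matrix.single i j (1:ℂ) := by
  ext a b
  simp [ketbra, Matrix.vecMulVec_apply, Matrix.sum_apply, Matrix.single,
    Pi.star_apply, RCLike.star_def, ite_and, mul_ite]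

lemma sum4_perm {M : Type*} [AddCommMonoid M] (f : Fin n → Fin n → Fin n → Fin n → M) :
    (∑ a, ∑ b, ∑ i, ∑ j, f a b i j) = ∑ j, ∑ a, ∑ i, ∑ b, f a b i j :=
  calc (∑ a, ∑ b, ∑ i, ∑ j, f a b i j)
      = ∑ a, ∑ b, ∑ j, ∑ i, f a b i j :=
        Finset.sum_congr rfl fun _ _ => Finset.sum_congr rfl fun _ _ => Finset.sum_comm
    _ = ∑ a, ∑ j, ∑ b, ∑ i, f a b i j :=
        Finset.sum_congr rfl fun _ _ => Finset.sum_comm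
    _ = ∑ j, ∑ a, ∑ b, ∑ i, f a b i j := Finset.sum_comm
    _ = ∑ j, ∑ a, ∑ i, ∑ b, f a b i j :=
        Finset.sum_congr rfl fun _ _ => Finset.sum_congr rfl fun _ _ => Finset.sum_comm

lemma fid_eq (Λ : MatMap n) (φ : Fin n → ℂ) :
    fid Λ φ = Bf (ptA (choi Λ)) (kron φ φ) (kron φ φ) := by
  rw [fid, qf, ketbra_eq, Bf]
  simp only [map_sum, LinearMap.map_smul]
  simp only [dotProduct, Matrix.mulVec, Matrix.sum_apply, Matrix.smul_apply, smul_eq_mul,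
    Fintype.sum_prod_type, Pi.star_apply, kron, ptA, choi, Matrix.of_apply, star_mul']
  simp only [Finset.mul_sum, Finset.sum_mul, RCLike.star_def]
  rw [sum4_perm]
  refine Finset.sum_congr rfl fun j _ => Finset.sum_congr rfl fun a _ =>
    Finset.sum_congr rfl fun i _ => Finset.sum_congr rfl fun b _ => ?_
  ring

lemma Bf_Psym_kron (M : Matrix (Fin n × Fin n) (Fin n × Fin n) ℂ) (φ : Fin n → ℂ) :
    Bf (Psym n * M * Psym n) (kron φ φ) (kron φ φ) = Bf M (kron φ φ) (kron φ φ) := by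
  rw [Bf, ← Matrix.mulVec_mulVec, Psym_mulVec_kron, ← Matrix.mulVec_mulVec,
    Matrix.dotProduct_mulVec, star_kron_vecMul_Psym, ← Bf]

end Stmt9Aux

open Stmt9Aux

theorem stmt9 {n : ℕ} (Q R : MatMap n) :
    (∀ φ : Fin n → ℂ, unitv φ → fid Q φ = fid R φ) ↔
      Psym n * ptA (choi Q) * Psym n = Psym n * ptA (choi R) * Psym n := by
  constructor
  · intro h
    set D := ptA (choi Q) - ptA (choi R) with hD
    -- Step A: the quadratic form of D vanishes on all product vectors
    have hA : ∀ ψ : Fin n → ℂ, Bf D (kron ψ ψ) (kron ψ ψ) = 0 := by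
      intro ψ
      by_cases hψ : ψ = 0
      · subst hψ
        have h0 : kron (0 : Fin n → ℂ) 0 = 0 := by funext p; simp [kron]
        rw [h0]
        simp [Bf]
      · obtain ⟨i0, hi0⟩ := Function.ne_iff.mp hψ
        set r : ℝ := ∑ i, Complex.normSq (ψ i) with hr
        have hrpos : 0 < r := Finset.sum_pos' (fun i _ => Complex.normSq_nonneg _)
          ⟨i0, Finset.mem_univ _, Complex.normSq_pos.mpr (by simpa using hi0)⟩
        set c : ℝ := (Real.sqrt r)⁻¹ with hc
        have hcpos : 0 < c := inv_pos.mpr (Real.sqrt_pos.mpr hrpos)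
        have hdot : star ψ ⬝ᵥ ψ = (r : ℂ) := by
          rw [hr]
          push_cast
          refine Finset.sum_congr rfl fun i _ => ?_
          rw [Complex.normSq_eq_conj_mul_self]
          rfl
        have hccr : c * c * r = 1 := by
          rw [hc, ← mul_inv, Real.mul_self_sqrt hrpos.le]
          exact inv_mul_cancel₀ hrpos.ne'
        have hdots : star ((c:ℂ) • ψ) ⬝ᵥ ((c:ℂ) • ψ) = (c:ℂ) * ((c:ℂ) * (r:ℂ)) := by
          rw [star_smul, smul_dotProduct, dotProduct_smul, hdot]
          simp [Complex.conj_ofReal, smul_eq_mul]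
        have hunit : unitv ((c : ℂ) • ψ) := by
          unfold unitv
          rw [hdots]
          norm_cast
          linear_combination hccr
        have h1 := h ((c : ℂ) • ψ) hunit
        have h2 : Bf D (kron ((c:ℂ) • ψ) ((c:ℂ) • ψ)) (kron ((c:ℂ) • ψ) ((c:ℂ) • ψ)) = 0 := by
          rw [hD, Bf_sub, ← fid_eq, ← fid_eq, h1, sub_self]
        rw [kron_smul_both, Bf_smul_left, Bf_smul_right] at h2
        have hconj : (starRingEnd ℂ) ((c:ℂ) * (c:ℂ)) = (c:ℂ) * (c:ℂ) := by
          simp [Complex.conj_ofReal]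
        rw [hconj] at h2
        have hcc : ((c:ℂ) * (c:ℂ)) ≠ 0 := by
          have : (c:ℂ) ≠ 0 := by
            simpa using hcpos.ne'
          exact mul_ne_zero this this
        rcases mul_eq_zero.mp h2 with h' | h2
        · exact absurd h' hcc
        rcases mul_eq_zero.mp h2 with h' | h2
        · exact absurd h' hcc
        exact h2
    -- polarization chain
    have hsym : ∀ a b : Fin n → ℂ,
        Bf D (kron a b + kron b a) (kron a b + kron b a) = 0 := by
      intro a b
      refine polar3 D (kron a a) (kron a b + kron b a) (kron b b) fun s => ?_
      rw [← kron_quad]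
      exact hA _
    have h3 : ∀ a b c : Fin n → ℂ,
        Bf D (kron a b + kron b a) (kron c b + kron b c) = 0 := by
      intro a b c
      refine polar2 D (kron a b + kron b a) (kron c b + kron b c)
        (kron a b + kron b a) (kron c b + kron b c) fun s => ?_
      rw [← sym_left]
      exact hsym _ _
    have h4 : ∀ a b c d : Fin n → ℂ,
        Bf D (kron a b + kron b a) (kron c d + kron d c) = 0 := by
      intro a b c d
      refine polar2 D (kron a b + kron b a) (kron a d + kron d a)
        (kron c b + kron b c) (kron c d + kron d c) fun s => ?_
      rw [← sym_right, ← sym_right]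
      exact h3 _ _ _
    -- conclude the matrix identity
    ext p q
    rw [Psym_entry, Psym_entry]
    have key := h4 (Pi.single p.1 1) (Pi.single p.2 1) (Pi.single q.1 1) (Pi.single q.2 1)
    rw [kron_single, kron_single, kron_single, kron_single] at key
    simp only [Bf_add_left, Bf_add_right, Bf_single] at key
    simp only [hD, Matrix.sub_apply] at key
    linear_combination (1/4 : ℂ) * key
  · intro hm φ _
    rw [fid_eq, fid_eq, ← Bf_Psym_kron (ptA (choi Q)) φ, ← Bf_Psym_kron (ptA (choi R)) φ, hm]
end
end

section
/- Let Q, R: L(H_2) → L(H_2) be quantum channels on a qubit with equal gate fidelity (⟨φ|Q(|φ⟩⟨φ|)|φ⟩ = ⟨φ|R(|φ⟩⟨φ|)|φ⟩ for all unit |φ⟩). Then there exist r ≥ 0 and a unital quantum channel E: L(H_2) → L(H_2) such that R = Q + r(E − E†). -/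
open Matrix BigOperators
open scoped ComplexOrder

noncomputable section

-- ==================== auxiliary lemmas ====================

lemma choi_apply' {n : ℕ} (Λ : MatMap n) (i a j b : Fin n) :
    choi Λ (i, a) (j, b) = Λ (Matrix.single i j 1) a b := rfl

lemma lam_apply' (Λ : MatMap 2) (X : Matrix (Fin 2) (Fin 2) ℂ) (a b : Fin 2) :
    Λ X a b = ∑ i : Fin 2, ∑ j : Fin 2, X i j * choi Λ (i, a) (j, b) := by
  conv_lhs => rw [Matrix.matrix_eq_sum_single X]
  rw [map_sum]
  simp only [map_sum, Matrix.sum_apply]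
  apply Finset.sum_congr rfl; intro i _
  apply Finset.sum_congr rfl; intro j _
  rw [show Matrix.single i j (X i j) = (X i j) • Matrix.single i j (1:ℂ) by
    rw [Matrix.smul_single, smul_eq_mul, mul_one]]
  rw [_root_.map_smul, Matrix.smul_apply, smul_eq_mul, choi_apply']

lemma ketbra_eq' (φ : Fin 2 → ℂ) :
    ketbra φ = ∑ i : Fin 2, ∑ j : Fin 2,
      (φ i * (starRingEnd ℂ) (φ j)) • Matrix.single i j (1 : ℂ) := by
  ext a b
  simp [ketbra, Matrix.vecMulVec_apply, Matrix.sum_apply, Matrix.single,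
    Fin.sum_univ_two, Complex.star_def]
  fin_cases a <;> fin_cases b <;> simp

lemma lam_ketbra' (Λ : MatMap 2) (φ : Fin 2 → ℂ) (a b : Fin 2) :
    Λ (ketbra φ) a b = ∑ i : Fin 2, ∑ j : Fin 2,
      φ i * (starRingEnd ℂ) (φ j) * choi Λ (i, a) (j, b) := by
  rw [ketbra_eq', map_sum]
  simp only [map_sum, _root_.map_smul, Matrix.sum_apply, Matrix.smul_apply, smul_eq_mul]
  rfl

lemma fid_expand' (Λ : MatMap 2) (φ : Fin 2 → ℂ) :
    fid Λ φ = ∑ a : Fin 2, ∑ b : Fin 2, ∑ i : Fin 2, ∑ j : Fin 2,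
      (starRingEnd ℂ) (φ a) * φ b * (φ i * (starRingEnd ℂ) (φ j)) * choi Λ (i, a) (j, b) := by
  rw [fid, qf]
  simp only [dotProduct, Matrix.mulVec, Pi.star_apply, Complex.star_def,
    lam_ketbra', Fin.sum_univ_two]
  ring

lemma traceL (Λ : MatMap 2) (X Y : Matrix (Fin 2) (Fin 2) ℂ) :
    (Λ X * Y).trace = ∑ i : Fin 2, ∑ j : Fin 2, ∑ k : Fin 2, ∑ l : Fin 2,
      X i j * Y k l * choi Λ (i, l) (j, k) := by
  simp only [Matrix.trace, Matrix.diag, Matrix.mul_apply, lam_apply', Fin.sum_univ_two,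
    Finset.sum_mul, Finset.mul_sum]
  ring

lemma traceR (Λ : MatMap 2) (X Y : Matrix (Fin 2) (Fin 2) ℂ) :
    (X * Λ Y).trace = ∑ i : Fin 2, ∑ j : Fin 2, ∑ k : Fin 2, ∑ l : Fin 2,
      X i j * Y k l * choi Λ (k, j) (l, i) := by
  simp only [Matrix.trace, Matrix.diag, Matrix.mul_apply, lam_apply', Fin.sum_univ_two,
    Finset.sum_mul, Finset.mul_sum]
  ring

lemma trace_stdBasisMatrix_mul (M : Matrix (Fin 2) (Fin 2) ℂ) (a b : Fin 2) :
    (Matrix.single b a 1 * M).trace = M a b := by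
  fin_cases a <;> fin_cases b <;>
    simp [Matrix.trace, Matrix.diag, Matrix.mul_apply, Matrix.single, Fin.sum_univ_two]

/-- The completely depolarizing channel on a qubit. -/
def dep2 : MatMap 2 where
  toFun X := (X.trace / 2) • (1 : Matrix (Fin 2) (Fin 2) ℂ)
  map_add' X Y := by simp [Matrix.trace_add, add_div, add_smul]
  map_smul' c X := by
    simp only [Matrix.trace_smul, smul_eq_mul, RingHom.id_apply, smul_smul]
    rw [mul_div_assoc]

lemma dep2_apply (X : Matrix (Fin 2) (Fin 2) ℂ) : dep2 X = (X.trace / 2) • 1 := rfl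

lemma choi_dep2 : choi dep2 = (2⁻¹ : ℂ) • (1 : Matrix (Fin 2 × Fin 2) (Fin 2 × Fin 2) ℂ) := by
  ext ⟨p1, p2⟩ ⟨q1, q2⟩
  simp only [choi, Matrix.of_apply, dep2_apply, Matrix.smul_apply, Matrix.one_apply,
    Matrix.trace, Matrix.diag, Fin.sum_univ_two, Matrix.single,
    Prod.mk.injEq, smul_eq_mul]
  fin_cases p1 <;> fin_cases q1 <;> fin_cases p2 <;> fin_cases q2 <;> norm_num

lemma choi_addsm (Λ Γ : MatMap 2) (c : ℂ) : choi (Λ + c • Γ) = choi Λ + c • choi Γ := by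
  ext p q
  simp [choi, LinearMap.add_apply, LinearMap.smul_apply]

lemma choi_subD (Λ Γ : MatMap 2) : choi (Λ - Γ) = choi Λ - choi Γ := by
  ext p q
  simp [choi, LinearMap.sub_apply]

lemma psd_smul {m : Type*} [Fintype m] (c : ℝ) (hc : 0 ≤ c) {A : Matrix m m ℂ}
    (hA : A.PosSemidef) : ((c : ℂ) • A).PosSemidef := by
  refine Matrix.PosSemidef.of_dotProduct_mulVec_nonneg ?_ ?_
  · unfold Matrix.IsHermitian
    rw [Matrix.conjTranspose_smul, hA.isHermitian]
    congr 1
    simp [Complex.ext_iff]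
  · intro x
    rw [Matrix.smul_mulVec, dotProduct_smul]
    have h0 : (0:ℂ) ≤ (c:ℂ) := by exact_mod_cast Complex.zero_le_real.mpr hc
    exact mul_nonneg h0 (hA.dotProduct_mulVec_nonneg x)

lemma qf_le_trace {m : Type*} [Fintype m] (B : Matrix m m ℂ) (x : m → ℂ) :
    dotProduct (star (B *ᵥ x)) (B *ᵥ x) ≤ (Bᴴ * B).trace * dotProduct (star x) x := by
  set y := B *ᵥ x with hy
  have e1 : dotProduct (star y) y = ((∑ i, Complex.normSq (y i) : ℝ) : ℂ) := by
    simp [dotProduct, Complex.normSq_eq_conj_mul_self]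
  have e2 : dotProduct (star x) x = ((∑ j, Complex.normSq (x j) : ℝ) : ℂ) := by
    simp [dotProduct, Complex.normSq_eq_conj_mul_self]
  have e3 : (Bᴴ * B).trace = ((∑ j, ∑ i, Complex.normSq (B i j) : ℝ) : ℂ) := by
    simp [Matrix.trace, Matrix.diag, Matrix.mul_apply, Matrix.conjTranspose_apply,
      Complex.normSq_eq_conj_mul_self]
  rw [e1, e2, e3, ← Complex.ofReal_mul]
  rw [Complex.real_le_real]
  have h2 : ∀ i, Complex.normSq (y i) ≤
      (∑ j, Complex.normSq (B i j)) * (∑ j, Complex.normSq (x j)) := by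
    intro i
    have habs : ‖y i‖ ≤ ∑ j, ‖B i j‖ * ‖x j‖ := by
      rw [hy]
      simpa [Matrix.mulVec, dotProduct, norm_mul] using
        norm_sum_le Finset.univ (fun j => B i j * x j)
    calc Complex.normSq (y i) = (‖y i‖)^2 := (Complex.sq_norm _).symm
      _ ≤ (∑ j, ‖B i j‖ * ‖x j‖)^2 := by
          apply pow_le_pow_left₀ (norm_nonneg _) habs
      _ ≤ (∑ j, (‖B i j‖)^2) * (∑ j, (‖x j‖)^2) :=
          Finset.sum_mul_sq_le_sq_mul_sq _ _ _
      _ = (∑ j, Complex.normSq (B i j)) * (∑ j, Complex.normSq (x j)) := by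
          simp [Complex.sq_norm]
  calc ∑ i, Complex.normSq (y i)
      ≤ ∑ i, (∑ j, Complex.normSq (B i j)) * (∑ j, Complex.normSq (x j)) :=
        Finset.sum_le_sum (fun i _ => h2 i)
    _ = (∑ i, ∑ j, Complex.normSq (B i j)) * (∑ j, Complex.normSq (x j)) :=
        (Finset.sum_mul _ _ _).symm
    _ = (∑ j, ∑ i, Complex.normSq (B i j)) * (∑ j, Complex.normSq (x j)) := by
        rw [Finset.sum_comm]

lemma psd_trace_sub {m : Type*} [Fintype m] [DecidableEq m] {A : Matrix m m ℂ}
    (hA : A.PosSemidef) : (A.trace • (1 : Matrix m m ℂ) - A).PosSemidef := by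
  obtain ⟨B, rfl⟩ : ∃ B : Matrix m m ℂ, A = Bᴴ * B := by
    classical
    open scoped MatrixOrder in
    obtain ⟨B, hB⟩ := CStarAlgebra.nonneg_iff_eq_star_mul_self.mp hA.nonneg
    exact ⟨B, hB⟩
  have htr : star (Bᴴ * B).trace = (Bᴴ * B).trace := by
    rw [← Matrix.trace_conjTranspose]
    congr 1
    exact hA.1
  refine Matrix.PosSemidef.of_dotProduct_mulVec_nonneg ?_ ?_
  · unfold Matrix.IsHermitian
    rw [Matrix.conjTranspose_sub, hA.isHermitian, Matrix.conjTranspose_smul, Matrix.conjTranspose_one, htr]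
  · intro x
    rw [Matrix.sub_mulVec, dotProduct_sub, Matrix.smul_mulVec, Matrix.one_mulVec,
      dotProduct_smul]
    rw [sub_nonneg]
    have h1 : dotProduct (star x) ((Bᴴ * B) *ᵥ x)
        = dotProduct (star (B *ᵥ x)) (B *ᵥ x) := by
      rw [← Matrix.mulVec_mulVec, Matrix.star_mulVec, ← dotProduct_mulVec]
    rw [h1, smul_eq_mul]
    exact qf_le_trace B x

set_option maxHeartbeats 4000000 in
theorem stmt14 (Q R : MatMap 2) (hQ : IsChannel Q) (hR : IsChannel R)
    (hfid : ∀ φ : Fin 2 → ℂ, unitv φ → fid Q φ = fid R φ) :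
    ∃ r : ℝ, 0 ≤ r ∧ ∃ E Ed : MatMap 2, IsChannel E ∧ E 1 = 1 ∧ IsDual E Ed ∧
      R = Q + (r : ℂ) • (E - Ed) := by
  obtain ⟨hQcp, hQtp⟩ := hQ
  obtain ⟨hRcp, hRtp⟩ := hR
  -- Hermiticity of Choi matrices
  have hermQ : ∀ p q : Fin 2 × Fin 2, (starRingEnd ℂ) (choi Q p q) = choi Q q p := by
    intro p q
    conv_rhs => rw [← hQcp.isHermitian]
    rw [Matrix.conjTranspose_apply, Complex.star_def]
  have hermR : ∀ p q : Fin 2 × Fin 2, (starRingEnd ℂ) (choi R p q) = choi R q p := by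
    intro p q
    conv_rhs => rw [← hRcp.isHermitian]
    rw [Matrix.conjTranspose_apply, Complex.star_def]
  -- trace preservation, difference form
  have tpD : ∀ i j : Fin 2,
      (choi R (i,0) (j,0) + choi R (i,1) (j,1))
        - (choi Q (i,0) (j,0) + choi Q (i,1) (j,1)) = 0 := by
    intro i j
    have hq := hQtp (Matrix.single i j 1)
    have hr := hRtp (Matrix.single i j 1)
    have h := hr.trans hq.symm
    simp only [Matrix.trace, Matrix.diag, Fin.sum_univ_two, ← choi_apply'] at h
    rw [sub_eq_zero]
    exact h
  have tpDc : ∀ i j : Fin 2,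
      ((starRingEnd ℂ) (choi R (i,0) (j,0)) + (starRingEnd ℂ) (choi R (i,1) (j,1)))
        - ((starRingEnd ℂ) (choi Q (i,0) (j,0)) + (starRingEnd ℂ) (choi Q (i,1) (j,1))) = 0 := by
    intro i j
    have h := congrArg (starRingEnd ℂ) (tpD i j)
    simpa only [map_sub, map_add, map_zero] using h
  -- master identity from equal gate fidelities
  have master : ∀ φ : Fin 2 → ℂ, unitv φ →
      (∑ a : Fin 2, ∑ b : Fin 2, ∑ i : Fin 2, ∑ j : Fin 2,
        (starRingEnd ℂ) (φ a) * φ b * (φ i * (starRingEnd ℂ) (φ j)) *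
          (choi R (i, a) (j, b) - choi Q (i, a) (j, b))) = 0 := by
    intro φ h
    have hf := hfid φ h
    rw [fid_expand', fid_expand'] at hf
    simp only [mul_sub, Finset.sum_sub_distrib]
    rw [sub_eq_zero]
    exact hf.symm
  have f0 := master ![(1 : ℂ), (0 : ℂ)] (by
    simp only [unitv, dotProduct, Fin.sum_univ_two, Pi.star_apply, Complex.star_def,
      Matrix.cons_val_zero, Matrix.cons_val_one, Matrix.head_cons, _root_.map_div₀, _root_.map_ofNat,
      _root_.map_one, _root_.map_mul, _root_.map_add, _root_.map_sub, _root_.map_neg, _root_.map_zero, Complex.conj_I]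
    linear_combination (0 : ℂ) * Complex.I_sq)
  simp only [Fin.sum_univ_two, Matrix.cons_val_zero, Matrix.cons_val_one, Matrix.head_cons,
    _root_.map_div₀, _root_.map_ofNat, _root_.map_one, _root_.map_mul, _root_.map_add, _root_.map_sub, _root_.map_neg, _root_.map_zero,
    Complex.conj_I] at f0
  have f0c := congrArg (starRingEnd ℂ) f0
  simp only [_root_.map_sub, _root_.map_add, _root_.map_mul, _root_.map_div₀, _root_.map_ofNat, _root_.map_one, _root_.map_zero, _root_.map_neg,
    Complex.conj_I] at f0c
  have f1 := master ![(0 : ℂ), (1 : ℂ)] (by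
    simp only [unitv, dotProduct, Fin.sum_univ_two, Pi.star_apply, Complex.star_def,
      Matrix.cons_val_zero, Matrix.cons_val_one, Matrix.head_cons, _root_.map_div₀, _root_.map_ofNat,
      _root_.map_one, _root_.map_mul, _root_.map_add, _root_.map_sub, _root_.map_neg, _root_.map_zero, Complex.conj_I]
    linear_combination (0 : ℂ) * Complex.I_sq)
  simp only [Fin.sum_univ_two, Matrix.cons_val_zero, Matrix.cons_val_one, Matrix.head_cons,
    _root_.map_div₀, _root_.map_ofNat, _root_.map_one, _root_.map_mul, _root_.map_add, _root_.map_sub, _root_.map_neg, _root_.map_zero,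
    Complex.conj_I] at f1
  have f1c := congrArg (starRingEnd ℂ) f1
  simp only [_root_.map_sub, _root_.map_add, _root_.map_mul, _root_.map_div₀, _root_.map_ofNat, _root_.map_one, _root_.map_zero, _root_.map_neg,
    Complex.conj_I] at f1c
  have f2 := master ![(3/5 : ℂ), (4/5 : ℂ)] (by
    simp only [unitv, dotProduct, Fin.sum_univ_two, Pi.star_apply, Complex.star_def,
      Matrix.cons_val_zero, Matrix.cons_val_one, Matrix.head_cons, _root_.map_div₀, _root_.map_ofNat,
      _root_.map_one, _root_.map_mul, _root_.map_add, _root_.map_sub, _root_.map_neg, _root_.map_zero, Complex.conj_I]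
    linear_combination (0 : ℂ) * Complex.I_sq)
  simp only [Fin.sum_univ_two, Matrix.cons_val_zero, Matrix.cons_val_one, Matrix.head_cons,
    _root_.map_div₀, _root_.map_ofNat, _root_.map_one, _root_.map_mul, _root_.map_add, _root_.map_sub, _root_.map_neg, _root_.map_zero,
    Complex.conj_I] at f2
  have f2c := congrArg (starRingEnd ℂ) f2
  simp only [_root_.map_sub, _root_.map_add, _root_.map_mul, _root_.map_div₀, _root_.map_ofNat, _root_.map_one, _root_.map_zero, _root_.map_neg,
    Complex.conj_I] at f2c
  have f3 := master ![(3/5 : ℂ), (-4/5 : ℂ)] (by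
    simp only [unitv, dotProduct, Fin.sum_univ_two, Pi.star_apply, Complex.star_def,
      Matrix.cons_val_zero, Matrix.cons_val_one, Matrix.head_cons, _root_.map_div₀, _root_.map_ofNat,
      _root_.map_one, _root_.map_mul, _root_.map_add, _root_.map_sub, _root_.map_neg, _root_.map_zero, Complex.conj_I]
    linear_combination (0 : ℂ) * Complex.I_sq)
  simp only [Fin.sum_univ_two, Matrix.cons_val_zero, Matrix.cons_val_one, Matrix.head_cons,
    _root_.map_div₀, _root_.map_ofNat, _root_.map_one, _root_.map_mul, _root_.map_add, _root_.map_sub, _root_.map_neg, _root_.map_zero,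
    Complex.conj_I] at f3
  have f3c := congrArg (starRingEnd ℂ) f3
  simp only [_root_.map_sub, _root_.map_add, _root_.map_mul, _root_.map_div₀, _root_.map_ofNat, _root_.map_one, _root_.map_zero, _root_.map_neg,
    Complex.conj_I] at f3c
  have f4 := master ![(4/5 : ℂ), (3/5 : ℂ)] (by
    simp only [unitv, dotProduct, Fin.sum_univ_two, Pi.star_apply, Complex.star_def,
      Matrix.cons_val_zero, Matrix.cons_val_one, Matrix.head_cons, _root_.map_div₀, _root_.map_ofNat,
      _root_.map_one, _root_.map_mul, _root_.map_add, _root_.map_sub, _root_.map_neg, _root_.map_zero, Complex.conj_I]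
    linear_combination (0 : ℂ) * Complex.I_sq)
  simp only [Fin.sum_univ_two, Matrix.cons_val_zero, Matrix.cons_val_one, Matrix.head_cons,
    _root_.map_div₀, _root_.map_ofNat, _root_.map_one, _root_.map_mul, _root_.map_add, _root_.map_sub, _root_.map_neg, _root_.map_zero,
    Complex.conj_I] at f4
  have f4c := congrArg (starRingEnd ℂ) f4
  simp only [_root_.map_sub, _root_.map_add, _root_.map_mul, _root_.map_div₀, _root_.map_ofNat, _root_.map_one, _root_.map_zero, _root_.map_neg,
    Complex.conj_I] at f4c
  have f5 := master ![(3/5 : ℂ), ((4/5 : ℂ) * Complex.I)] (by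
    simp only [unitv, dotProduct, Fin.sum_univ_two, Pi.star_apply, Complex.star_def,
      Matrix.cons_val_zero, Matrix.cons_val_one, Matrix.head_cons, _root_.map_div₀, _root_.map_ofNat,
      _root_.map_one, _root_.map_mul, _root_.map_add, _root_.map_sub, _root_.map_neg, _root_.map_zero, Complex.conj_I]
    linear_combination (-16/25 : ℂ) * Complex.I_sq)
  simp only [Fin.sum_univ_two, Matrix.cons_val_zero, Matrix.cons_val_one, Matrix.head_cons,
    _root_.map_div₀, _root_.map_ofNat, _root_.map_one, _root_.map_mul, _root_.map_add, _root_.map_sub, _root_.map_neg, _root_.map_zero,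
    Complex.conj_I] at f5
  have f5c := congrArg (starRingEnd ℂ) f5
  simp only [_root_.map_sub, _root_.map_add, _root_.map_mul, _root_.map_div₀, _root_.map_ofNat, _root_.map_one, _root_.map_zero, _root_.map_neg,
    Complex.conj_I] at f5c
  have f6 := master ![(3/5 : ℂ), ((-4/5 : ℂ) * Complex.I)] (by
    simp only [unitv, dotProduct, Fin.sum_univ_two, Pi.star_apply, Complex.star_def,
      Matrix.cons_val_zero, Matrix.cons_val_one, Matrix.head_cons, _root_.map_div₀, _root_.map_ofNat,
      _root_.map_one, _root_.map_mul, _root_.map_add, _root_.map_sub, _root_.map_neg, _root_.map_zero, Complex.conj_I]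
    linear_combination (-16/25 : ℂ) * Complex.I_sq)
  simp only [Fin.sum_univ_two, Matrix.cons_val_zero, Matrix.cons_val_one, Matrix.head_cons,
    _root_.map_div₀, _root_.map_ofNat, _root_.map_one, _root_.map_mul, _root_.map_add, _root_.map_sub, _root_.map_neg, _root_.map_zero,
    Complex.conj_I] at f6
  have f6c := congrArg (starRingEnd ℂ) f6
  simp only [_root_.map_sub, _root_.map_add, _root_.map_mul, _root_.map_div₀, _root_.map_ofNat, _root_.map_one, _root_.map_zero, _root_.map_neg,
    Complex.conj_I] at f6c
  have f7 := master ![(4/5 : ℂ), ((3/5 : ℂ) * Complex.I)] (by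
    simp only [unitv, dotProduct, Fin.sum_univ_two, Pi.star_apply, Complex.star_def,
      Matrix.cons_val_zero, Matrix.cons_val_one, Matrix.head_cons, _root_.map_div₀, _root_.map_ofNat,
      _root_.map_one, _root_.map_mul, _root_.map_add, _root_.map_sub, _root_.map_neg, _root_.map_zero, Complex.conj_I]
    linear_combination (-9/25 : ℂ) * Complex.I_sq)
  simp only [Fin.sum_univ_two, Matrix.cons_val_zero, Matrix.cons_val_one, Matrix.head_cons,
    _root_.map_div₀, _root_.map_ofNat, _root_.map_one, _root_.map_mul, _root_.map_add, _root_.map_sub, _root_.map_neg, _root_.map_zero,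
    Complex.conj_I] at f7
  have f7c := congrArg (starRingEnd ℂ) f7
  simp only [_root_.map_sub, _root_.map_add, _root_.map_mul, _root_.map_div₀, _root_.map_ofNat, _root_.map_one, _root_.map_zero, _root_.map_neg,
    Complex.conj_I] at f7c
  have f8 := master ![(2/3 : ℂ), (((2/3 : ℂ) + (1/3 : ℂ) * Complex.I))] (by
    simp only [unitv, dotProduct, Fin.sum_univ_two, Pi.star_apply, Complex.star_def,
      Matrix.cons_val_zero, Matrix.cons_val_one, Matrix.head_cons, _root_.map_div₀, _root_.map_ofNat,
      _root_.map_one, _root_.map_mul, _root_.map_add, _root_.map_sub, _root_.map_neg, _root_.map_zero, Complex.conj_I]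
    linear_combination (-1/9 : ℂ) * Complex.I_sq)
  simp only [Fin.sum_univ_two, Matrix.cons_val_zero, Matrix.cons_val_one, Matrix.head_cons,
    _root_.map_div₀, _root_.map_ofNat, _root_.map_one, _root_.map_mul, _root_.map_add, _root_.map_sub, _root_.map_neg, _root_.map_zero,
    Complex.conj_I] at f8
  have f8c := congrArg (starRingEnd ℂ) f8
  simp only [_root_.map_sub, _root_.map_add, _root_.map_mul, _root_.map_div₀, _root_.map_ofNat, _root_.map_one, _root_.map_zero, _root_.map_neg,
    Complex.conj_I] at f8c
  have f9 := master ![(2/3 : ℂ), (((2/3 : ℂ) + (-1/3 : ℂ) * Complex.I))] (by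
    simp only [unitv, dotProduct, Fin.sum_univ_two, Pi.star_apply, Complex.star_def,
      Matrix.cons_val_zero, Matrix.cons_val_one, Matrix.head_cons, _root_.map_div₀, _root_.map_ofNat,
      _root_.map_one, _root_.map_mul, _root_.map_add, _root_.map_sub, _root_.map_neg, _root_.map_zero, Complex.conj_I]
    linear_combination (-1/9 : ℂ) * Complex.I_sq)
  simp only [Fin.sum_univ_two, Matrix.cons_val_zero, Matrix.cons_val_one, Matrix.head_cons,
    _root_.map_div₀, _root_.map_ofNat, _root_.map_one, _root_.map_mul, _root_.map_add, _root_.map_sub, _root_.map_neg, _root_.map_zero,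
    Complex.conj_I] at f9
  have f9c := congrArg (starRingEnd ℂ) f9
  simp only [_root_.map_sub, _root_.map_add, _root_.map_mul, _root_.map_div₀, _root_.map_ofNat, _root_.map_one, _root_.map_zero, _root_.map_neg,
    Complex.conj_I] at f9c
  have f10 := master ![(2/3 : ℂ), (((1/3 : ℂ) + (2/3 : ℂ) * Complex.I))] (by
    simp only [unitv, dotProduct, Fin.sum_univ_two, Pi.star_apply, Complex.star_def,
      Matrix.cons_val_zero, Matrix.cons_val_one, Matrix.head_cons, _root_.map_div₀, _root_.map_ofNat,
      _root_.map_one, _root_.map_mul, _root_.map_add, _root_.map_sub, _root_.map_neg, _root_.map_zero, Complex.conj_I]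
    linear_combination (-4/9 : ℂ) * Complex.I_sq)
  simp only [Fin.sum_univ_two, Matrix.cons_val_zero, Matrix.cons_val_one, Matrix.head_cons,
    _root_.map_div₀, _root_.map_ofNat, _root_.map_one, _root_.map_mul, _root_.map_add, _root_.map_sub, _root_.map_neg, _root_.map_zero,
    Complex.conj_I] at f10
  have f10c := congrArg (starRingEnd ℂ) f10
  simp only [_root_.map_sub, _root_.map_add, _root_.map_mul, _root_.map_div₀, _root_.map_ofNat, _root_.map_one, _root_.map_zero, _root_.map_neg,
    Complex.conj_I] at f10c
  have f11 := master ![(1/3 : ℂ), (((2/3 : ℂ) + (2/3 : ℂ) * Complex.I))] (by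
    simp only [unitv, dotProduct, Fin.sum_univ_two, Pi.star_apply, Complex.star_def,
      Matrix.cons_val_zero, Matrix.cons_val_one, Matrix.head_cons, _root_.map_div₀, _root_.map_ofNat,
      _root_.map_one, _root_.map_mul, _root_.map_add, _root_.map_sub, _root_.map_neg, _root_.map_zero, Complex.conj_I]
    linear_combination (-4/9 : ℂ) * Complex.I_sq)
  simp only [Fin.sum_univ_two, Matrix.cons_val_zero, Matrix.cons_val_one, Matrix.head_cons,
    _root_.map_div₀, _root_.map_ofNat, _root_.map_one, _root_.map_mul, _root_.map_add, _root_.map_sub, _root_.map_neg, _root_.map_zero,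
    Complex.conj_I] at f11
  have f11c := congrArg (starRingEnd ℂ) f11
  simp only [_root_.map_sub, _root_.map_add, _root_.map_mul, _root_.map_div₀, _root_.map_ofNat, _root_.map_one, _root_.map_zero, _root_.map_neg,
    Complex.conj_I] at f11c
  have sk0000 : (choi R ((0:Fin 2), (0:Fin 2)) ((0:Fin 2), (0:Fin 2)) - choi Q ((0:Fin 2), (0:Fin 2)) ((0:Fin 2), (0:Fin 2))) + (choi R ((0:Fin 2), (0:Fin 2)) ((0:Fin 2), (0:Fin 2)) - choi Q ((0:Fin 2), (0:Fin 2)) ((0:Fin 2), (0:Fin 2))) = 0 := by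
    linear_combination (2 : ℂ) * f0
  have sk0001 : (choi R ((0:Fin 2), (1:Fin 2)) ((0:Fin 2), (0:Fin 2)) - choi Q ((0:Fin 2), (1:Fin 2)) ((0:Fin 2), (0:Fin 2))) + (choi R ((0:Fin 2), (0:Fin 2)) ((1:Fin 2), (0:Fin 2)) - choi Q ((0:Fin 2), (0:Fin 2)) ((1:Fin 2), (0:Fin 2))) = 0 := by
    linear_combination ((-2/3 : ℂ) + (-2/3 : ℂ) * Complex.I) * f0 + ((2/3 : ℂ) + (2/3 : ℂ) * Complex.I) * f1 + (-625/336 : ℂ) * f2 + (-25/48 : ℂ) * f3 + (50/21 : ℂ) * f4 + ((-625/336 : ℂ) * Complex.I) * f5 + ((-25/48 : ℂ) * Complex.I) * f6 + ((50/21 : ℂ) * Complex.I) * f7 + (-((((1/2 : ℂ)) * (choi R ((1:Fin 2), (0:Fin 2)) ((0:Fin 2), (0:Fin 2))) + ((1/2 : ℂ)) * (choi R ((0:Fin 2), (0:Fin 2)) ((0:Fin 2), (1:Fin 2))) + ((-1/2 : ℂ)) * (choi R ((0:Fin 2), (0:Fin 2)) ((1:Fin 2), (0:Fin 2))) + ((2/3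 : ℂ) * Complex.I + (-2/3 : ℂ) * Complex.I^3) * (choi R ((1:Fin 2), (1:Fin 2)) ((1:Fin 2), (1:Fin 2))) + ((1/2 : ℂ)) * (choi Q ((0:Fin 2), (1:Fin 2)) ((0:Fin 2), (0:Fin 2))) + ((-2/3 : ℂ) * Complex.I + (2/3 : ℂ) * Complex.I^3) * (choi Q ((1:Fin 2), (1:Fin 2)) ((1:Fin 2), (1:Fin 2))) + ((-1/2 : ℂ)) * (choi Q ((1:Fin 2), (0:Fin 2)) ((0:Fin 2), (0:Fin 2))) + ((-1/2 : ℂ)) * (choi Q ((0:Fin 2), (0:Fin 2)) ((0:Fin 2), (1:Fin 2))) + ((-1/2 : ℂ)) * (choi R ((0:Fin 2), (1:Fin 2)) ((0:Fin 2), (0:Fin 2))) + ((1/2 : ℂ)) * (choi Q ((0:Fin 2), (0:Fin 2)) ((1:Fin 2), (0:Fin 2)))))) * Complex.I_sq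
  have sk0010 : (choi R ((0:Fin 2), (0:Fin 2)) ((0:Fin 2), (1:Fin 2)) - choi Q ((0:Fin 2), (0:Fin 2)) ((0:Fin 2), (1:Fin 2))) + (choi R ((1:Fin 2), (0:Fin 2)) ((0:Fin 2), (0:Fin 2)) - choi Q ((1:Fin 2), (0:Fin 2)) ((0:Fin 2), (0:Fin 2))) = 0 := by
    linear_combination ((-2/3 : ℂ) + (2/3 : ℂ) * Complex.I) * f0 + ((2/3 : ℂ) + (-2/3 : ℂ) * Complex.I) * f1 + (-625/336 : ℂ) * f2 + (-25/48 : ℂ) * f3 + (50/21 : ℂ) * f4 + ((625/336 : ℂ) * Complex.I) * f5 + ((25/48 : ℂ) * Complex.I) * f6 + ((-50/21 : ℂ) * Complex.I) * f7 + (-((((-1/2 : ℂ)) * (choi R ((1:Fin 2), (0:Fin 2)) ((0:Fin 2), (0:Fin 2))) + ((-1/2 : ℂ)) * (choi R ((0:Fin 2), (0:Fin 2)) ((0:Fin 2), (1:Fin 2))) + ((1/2 : ℂ)) * (choi R ((0:Fin 2), (0:Fin 2)) ((1:Fin 2), (0:Fin 2))) + ((-2/3 : ℂ) * Complex.I + (2/3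 : ℂ) * Complex.I^3) * (choi R ((1:Fin 2), (1:Fin 2)) ((1:Fin 2), (1:Fin 2))) + ((-1/2 : ℂ)) * (choi Q ((0:Fin 2), (1:Fin 2)) ((0:Fin 2), (0:Fin 2))) + ((2/3 : ℂ) * Complex.I + (-2/3 : ℂ) * Complex.I^3) * (choi Q ((1:Fin 2), (1:Fin 2)) ((1:Fin 2), (1:Fin 2))) + ((1/2 : ℂ)) * (choi Q ((1:Fin 2), (0:Fin 2)) ((0:Fin 2), (0:Fin 2))) + ((1/2 : ℂ)) * (choi Q ((0:Fin 2), (0:Fin 2)) ((0:Fin 2), (1:Fin 2))) + ((1/2 : ℂ)) * (choi R ((0:Fin 2), (1:Fin 2)) ((0:Fin 2), (0:Fin 2))) + ((-1/2 : ℂ)) * (choi Q ((0:Fin 2), (0:Fin 2)) ((1:Fin 2), (0:Fin 2)))))) * Complex.I_sq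
  have sk0011 : (choi R ((0:Fin 2), (1:Fin 2)) ((0:Fin 2), (1:Fin 2)) - choi Q ((0:Fin 2), (1:Fin 2)) ((0:Fin 2), (1:Fin 2))) + (choi R ((1:Fin 2), (0:Fin 2)) ((1:Fin 2), (0:Fin 2)) - choi Q ((1:Fin 2), (0:Fin 2)) ((1:Fin 2), (0:Fin 2))) = 0 := by
    linear_combination (1 : ℂ) * tpD 0 0 + (1 : ℂ) * tpD 1 1 + (-1 : ℂ) * f0 + (-1 : ℂ) * f1
  have sk0100 : (choi R ((0:Fin 2), (0:Fin 2)) ((1:Fin 2), (0:Fin 2)) - choi Q ((0:Fin 2), (0:Fin 2)) ((1:Fin 2), (0:Fin 2))) + (choi R ((0:Fin 2), (1:Fin 2)) ((0:Fin 2), (0:Fin 2)) - choi Q ((0:Fin 2), (1:Fin 2)) ((0:Fin 2), (0:Fin 2))) = 0 := by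
    linear_combination ((-2/3 : ℂ) + (-2/3 : ℂ) * Complex.I) * f0 + ((2/3 : ℂ) + (2/3 : ℂ) * Complex.I) * f1 + (-625/336 : ℂ) * f2 + (-25/48 : ℂ) * f3 + (50/21 : ℂ) * f4 + ((-625/336 : ℂ) * Complex.I) * f5 + ((-25/48 : ℂ) * Complex.I) * f6 + ((50/21 : ℂ) * Complex.I) * f7 + (-((((1/2 : ℂ)) * (choi R ((1:Fin 2), (0:Fin 2)) ((0:Fin 2), (0:Fin 2))) + ((1/2 : ℂ)) * (choi R ((0:Fin 2), (0:Fin 2)) ((0:Fin 2), (1:Fin 2))) + ((-1/2 : ℂ)) * (choi R ((0:Fin 2), (0:Fin 2)) ((1:Fin 2), (0:Fin 2))) + ((2/3 : ℂ) * Complex.I + (-2/3 : ℂ) * Complex.I^3) * (choi R ((1:Fin 2), (1:Fin 2)) ((1:Fin 2), (1:Fin 2))) + ((1/2 : ℂ)) * (choi Q ((0:Fin 2), (1:Fin 2)) ((0:Fin 2), (0:Fin 2))) + ((-2/3 : ℂ) * Complex.I + (2/3 : ℂ) * Complex.I^3) * (choi Q ((1:Fin 2), (1:Fin 2)) ((1:Fin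 2), (1:Fin 2))) + ((-1/2 : ℂ)) * (choi Q ((1:Fin 2), (0:Fin 2)) ((0:Fin 2), (0:Fin 2))) + ((-1/2 : ℂ)) * (choi Q ((0:Fin 2), (0:Fin 2)) ((0:Fin 2), (1:Fin 2))) + ((-1/2 : ℂ)) * (choi R ((0:Fin 2), (1:Fin 2)) ((0:Fin 2), (0:Fin 2))) + ((1/2 : ℂ)) * (choi Q ((0:Fin 2), (0:Fin 2)) ((1:Fin 2), (0:Fin 2)))))) * Complex.I_sq
  have sk0101 : (choi R ((0:Fin 2), (1:Fin 2)) ((1:Fin 2), (0:Fin 2)) - choi Q ((0:Fin 2), (1:Fin 2)) ((1:Fin 2), (0:Fin 2))) + (choi R ((0:Fin 2), (1:Fin 2)) ((1:Fin 2), (0:Fin 2)) - choi Q ((0:Fin 2), (1:Fin 2)) ((1:Fin 2), (0:Fin 2))) = 0 := by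
    linear_combination ((19/64 : ℂ) * Complex.I) * f0 + ((19/288 : ℂ) * Complex.I) * f1 + ((625/576 : ℂ) + (-3125/1008 : ℂ) * Complex.I) * f2 + ((625/576 : ℂ) + (25/144 : ℂ) * Complex.I) * f3 + ((-475/336 : ℂ) * Complex.I) * f4 + ((-625/576 : ℂ) + (-8125/8064 : ℂ) * Complex.I) * f5 + ((-625/576 : ℂ) + (725/1152 : ℂ) * Complex.I) * f6 + ((-475/672 : ℂ) * Complex.I) * f7 + ((81/16 : ℂ) * Complex.I) * f8 + (-((((-1/2 : ℂ)) * (choi Q ((1:Fin 2), (0:Fin 2)) ((1:Fin 2), (0:Fin 2))) + ((1/2 : ℂ)) * (choi R ((0:Fin 2), (1:Fin 2)) ((0:Fin 2), (1:Fin 2))) + ((1/4 : ℂ) * Complex.I + (1/2 : ℂ) * Complex.I^2) * (choi Q ((0:Fin 2), (1:Fin 2)) ((1:Fin 2), (1:Fin 2))) + ((1/4 : ℂ) * Complex.I + (1/2 : ℂ) * Complex.I^2) * (choi Q ((1:Fin 2), (1:Fin 2)) ((1:Fin 2), (0:Fin 2))) + ((-3/2 : ℂ)) * (choi R ((0:Fin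 2), (1:Fin 2)) ((1:Fin 2), (0:Fin 2))) + ((1/4 : ℂ) * Complex.I + (-1/2 : ℂ) * Complex.I^2) * (choi Q ((1:Fin 2), (1:Fin 2)) ((0:Fin 2), (1:Fin 2))) + ((1/2 : ℂ)) * (choi R ((1:Fin 2), (0:Fin 2)) ((1:Fin 2), (0:Fin 2))) + ((1/2 : ℂ)) * (choi R ((1:Fin 2), (0:Fin 2)) ((0:Fin 2), (1:Fin 2))) + ((-1/2 : ℂ)) * (choi Q ((0:Fin 2), (0:Fin 2)) ((1:Fin 2), (1:Fin 2))) + ((8/9 : ℂ) + (-91/288 : ℂ) * Complex.I + (-8/9 : ℂ) * Complex.I^2 + (-53/288 : ℂ) * Complex.I^3) * (choi R ((1:Fin 2), (1:Fin 2)) ((1:Fin 2), (1:Fin 2))) + ((-1/2 : ℂ)) * (choi Q ((0:Fin 2), (1:Fin 2)) ((0:Fin 2), (1:Fin 2))) + ((1/4 : ℂ) * Complex.I + (-1/2 : ℂ) * Complex.I^2) * (choi Q ((1:Fin 2), (0:Fin 2)) ((1:Fin 2), (1:Fin 2))) + ((3/2 : ℂ)) * (choi Q ((0:Fin 2), (1:Fin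 2)) ((1:Fin 2), (0:Fin 2))) + ((-8/9 : ℂ) + (91/288 : ℂ) * Complex.I + (8/9 : ℂ) * Complex.I^2 + (53/288 : ℂ) * Complex.I^3) * (choi Q ((1:Fin 2), (1:Fin 2)) ((1:Fin 2), (1:Fin 2))) + ((1/2 : ℂ)) * (choi R ((1:Fin 2), (1:Fin 2)) ((0:Fin 2), (0:Fin 2))) + ((-1/4 : ℂ) * Complex.I + (-1/2 : ℂ) * Complex.I^2) * (choi R ((0:Fin 2), (1:Fin 2)) ((1:Fin 2), (1:Fin 2))) + ((1/2 : ℂ)) * (choi R ((0:Fin 2), (0:Fin 2)) ((1:Fin 2), (1:Fin 2))) + ((-1/4 : ℂ) * Complex.I + (1/2 : ℂ) * Complex.I^2) * (choi R ((1:Fin 2), (0:Fin 2)) ((1:Fin 2), (1:Fin 2))) + ((-1/4 : ℂ) * Complex.I + (-1/2 : ℂ) * Complex.I^2) * (choi R ((1:Fin 2), (1:Fin 2)) ((1:Fin 2), (0:Fin 2))) + ((-1/2 : ℂ)) * (choi Q ((1:Fin 2), (0:Fin 2)) ((0:Fin 2), (1:Fin 2))) + ((-1/2 : ℂ)) * (choi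 Q ((1:Fin 2), (1:Fin 2)) ((0:Fin 2), (0:Fin 2))) + ((-1/4 : ℂ) * Complex.I + (1/2 : ℂ) * Complex.I^2) * (choi R ((1:Fin 2), (1:Fin 2)) ((0:Fin 2), (1:Fin 2)))))) * Complex.I_sq
  have sk0110 : (choi R ((0:Fin 2), (0:Fin 2)) ((1:Fin 2), (1:Fin 2)) - choi Q ((0:Fin 2), (0:Fin 2)) ((1:Fin 2), (1:Fin 2))) + (choi R ((1:Fin 2), (1:Fin 2)) ((0:Fin 2), (0:Fin 2)) - choi Q ((1:Fin 2), (1:Fin 2)) ((0:Fin 2), (0:Fin 2))) = 0 := by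
    linear_combination (-1 : ℂ) * tpD 0 0 + (-1 : ℂ) * tpD 1 1 + (7/16 : ℂ) * f0 + (-7/9 : ℂ) * f1 + (625/576 : ℂ) * f2 + (625/576 : ℂ) * f3 + (625/576 : ℂ) * f5 + (625/576 : ℂ) * f6 + (-((((1/2 : ℂ)) * (choi Q ((1:Fin 2), (0:Fin 2)) ((1:Fin 2), (0:Fin 2))) + ((-1/2 : ℂ)) * (choi R ((0:Fin 2), (1:Fin 2)) ((0:Fin 2), (1:Fin 2))) + ((1/2 : ℂ)) * (choi R ((0:Fin 2), (1:Fin 2)) ((1:Fin 2), (0:Fin 2))) + ((-1/2 : ℂ)) * (choi R ((1:Fin 2), (0:Fin 2)) ((1:Fin 2), (0:Fin 2))) + ((1/2 : ℂ)) * (choi R ((1:Fin 2), (0:Fin 2)) ((0:Fin 2), (1:Fin 2))) + ((1/2 : ℂ)) * (choi Q ((0:Fin 2), (0:Fin 2)) ((1:Fin 2), (1:Fin 2))) + ((-8/9 : ℂ) + (8/9 : ℂ) * Complex.I^2) * (choi R ((1:Fin 2), (1:Fin 2)) ((1:Fin 2), (1:Fin 2))) + ((1/2 : ℂ)) * (choi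 Q ((0:Fin 2), (1:Fin 2)) ((0:Fin 2), (1:Fin 2))) + ((-1/2 : ℂ)) * (choi Q ((0:Fin 2), (1:Fin 2)) ((1:Fin 2), (0:Fin 2))) + ((8/9 : ℂ) + (-8/9 : ℂ) * Complex.I^2) * (choi Q ((1:Fin 2), (1:Fin 2)) ((1:Fin 2), (1:Fin 2))) + ((-1/2 : ℂ)) * (choi R ((1:Fin 2), (1:Fin 2)) ((0:Fin 2), (0:Fin 2))) + ((-1/2 : ℂ)) * (choi R ((0:Fin 2), (0:Fin 2)) ((1:Fin 2), (1:Fin 2))) + ((-1/2 : ℂ)) * (choi Q ((1:Fin 2), (0:Fin 2)) ((0:Fin 2), (1:Fin 2))) + ((1/2 : ℂ)) * (choi Q ((1:Fin 2), (1:Fin 2)) ((0:Fin 2), (0:Fin 2)))))) * Complex.I_sq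
  have sk0111 : (choi R ((0:Fin 2), (1:Fin 2)) ((1:Fin 2), (1:Fin 2)) - choi Q ((0:Fin 2), (1:Fin 2)) ((1:Fin 2), (1:Fin 2))) + (choi R ((1:Fin 2), (1:Fin 2)) ((1:Fin 2), (0:Fin 2)) - choi Q ((1:Fin 2), (1:Fin 2)) ((1:Fin 2), (0:Fin 2))) = 0 := by
    linear_combination ((3/8 : ℂ) + (3/8 : ℂ) * Complex.I) * f0 + ((-3/8 : ℂ) + (-3/8 : ℂ) * Complex.I) * f1 + (625/336 : ℂ) * f2 + (-25/48 : ℂ) * f3 + (-75/56 : ℂ) * f4 + ((625/336 : ℂ) * Complex.I) * f5 + ((-25/48 : ℂ) * Complex.I) * f6 + ((-75/56 : ℂ) * Complex.I) * f7 + (-((((1/2 : ℂ) + (-1/2 : ℂ) * Complex.I^2) * (choi Q ((0:Fin 2), (1:Fin 2)) ((1:Fin 2), (1:Fin 2))) + ((1/2 : ℂ) + (-1/2 : ℂ) * Complex.I^2) * (choi Q ((1:Fin 2), (1:Fin 2)) ((1:Fin 2), (0:Fin 2))) + ((-1/2 : ℂ) + (1/2 : ℂ) * Complex.I^2) * (choi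 Q ((1:Fin 2), (1:Fin 2)) ((0:Fin 2), (1:Fin 2))) + ((-3/8 : ℂ) * Complex.I + (3/8 : ℂ) * Complex.I^3) * (choi R ((1:Fin 2), (1:Fin 2)) ((1:Fin 2), (1:Fin 2))) + ((-1/2 : ℂ) + (1/2 : ℂ) * Complex.I^2) * (choi Q ((1:Fin 2), (0:Fin 2)) ((1:Fin 2), (1:Fin 2))) + ((3/8 : ℂ) * Complex.I + (-3/8 : ℂ) * Complex.I^3) * (choi Q ((1:Fin 2), (1:Fin 2)) ((1:Fin 2), (1:Fin 2))) + ((-1/2 : ℂ) + (1/2 : ℂ) * Complex.I^2) * (choi R ((0:Fin 2), (1:Fin 2)) ((1:Fin 2), (1:Fin 2))) + ((1/2 : ℂ) + (-1/2 : ℂ) * Complex.I^2) * (choi R ((1:Fin 2), (0:Fin 2)) ((1:Fin 2), (1:Fin 2))) + ((-1/2 : ℂ) + (1/2 : ℂ) * Complex.I^2) * (choi R ((1:Fin 2), (1:Fin 2)) ((1:Fin 2), (0:Fin 2))) + ((1/2 : ℂ) + (-1/2 : ℂ) * Complex.I^2) * (choi R ((1:Fin 2), (1:Fin 2)) ((0:Fin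 2), (1:Fin 2)))))) * Complex.I_sq
  have sk1000 : (choi R ((1:Fin 2), (0:Fin 2)) ((0:Fin 2), (0:Fin 2)) - choi Q ((1:Fin 2), (0:Fin 2)) ((0:Fin 2), (0:Fin 2))) + (choi R ((0:Fin 2), (0:Fin 2)) ((0:Fin 2), (1:Fin 2)) - choi Q ((0:Fin 2), (0:Fin 2)) ((0:Fin 2), (1:Fin 2))) = 0 := by
    linear_combination ((-2/3 : ℂ) + (2/3 : ℂ) * Complex.I) * f0 + ((2/3 : ℂ) + (-2/3 : ℂ) * Complex.I) * f1 + (-625/336 : ℂ) * f2 + (-25/48 : ℂ) * f3 + (50/21 : ℂ) * f4 + ((625/336 : ℂ) * Complex.I) * f5 + ((25/48 : ℂ) * Complex.I) * f6 + ((-50/21 : ℂ) * Complex.I) * f7 + (-((((-1/2 : ℂ)) * (choi R ((1:Fin 2), (0:Fin 2)) ((0:Fin 2), (0:Fin 2))) + ((-1/2 : ℂ)) * (choi R ((0:Fin 2), (0:Fin 2)) ((0:Fin 2), (1:Fin 2))) + ((1/2 : ℂ)) * (choi R ((0:Fin 2), (0:Fin 2)) ((1:Fin 2), (0:Fin 2)))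 + ((-2/3 : ℂ) * Complex.I + (2/3 : ℂ) * Complex.I^3) * (choi R ((1:Fin 2), (1:Fin 2)) ((1:Fin 2), (1:Fin 2))) + ((-1/2 : ℂ)) * (choi Q ((0:Fin 2), (1:Fin 2)) ((0:Fin 2), (0:Fin 2))) + ((2/3 : ℂ) * Complex.I + (-2/3 : ℂ) * Complex.I^3) * (choi Q ((1:Fin 2), (1:Fin 2)) ((1:Fin 2), (1:Fin 2))) + ((1/2 : ℂ)) * (choi Q ((1:Fin 2), (0:Fin 2)) ((0:Fin 2), (0:Fin 2))) + ((1/2 : ℂ)) * (choi Q ((0:Fin 2), (0:Fin 2)) ((0:Fin 2), (1:Fin 2))) + ((1/2 : ℂ)) * (choi R ((0:Fin 2), (1:Fin 2)) ((0:Fin 2), (0:Fin 2))) + ((-1/2 : ℂ)) * (choi Q ((0:Fin 2), (0:Fin 2)) ((1:Fin 2), (0:Fin 2)))))) * Complex.I_sq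
  have sk1001 : (choi R ((1:Fin 2), (1:Fin 2)) ((0:Fin 2), (0:Fin 2)) - choi Q ((1:Fin 2), (1:Fin 2)) ((0:Fin 2), (0:Fin 2))) + (choi R ((0:Fin 2), (0:Fin 2)) ((1:Fin 2), (1:Fin 2)) - choi Q ((0:Fin 2), (0:Fin 2)) ((1:Fin 2), (1:Fin 2))) = 0 := by
    linear_combination (-1 : ℂ) * tpD 0 0 + (-1 : ℂ) * tpD 1 1 + (7/16 : ℂ) * f0 + (-7/9 : ℂ) * f1 + (625/576 : ℂ) * f2 + (625/576 : ℂ) * f3 + (625/576 : ℂ) * f5 + (625/576 : ℂ) * f6 + (-((((1/2 : ℂ)) * (choi Q ((1:Fin 2), (0:Fin 2)) ((1:Fin 2), (0:Fin 2))) + ((-1/2 : ℂ)) * (choi R ((0:Fin 2), (1:Fin 2)) ((0:Fin 2), (1:Fin 2))) + ((1/2 : ℂ)) * (choi R ((0:Fin 2), (1:Fin 2)) ((1:Fin 2), (0:Fin 2))) + ((-1/2 : ℂ)) * (choi R ((1:Fin 2), (0:Fin 2)) ((1:Fin 2), (0:Fin 2))) + ((1/2 : ℂ)) * (choi R ((1:Fin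 2), (0:Fin 2)) ((0:Fin 2), (1:Fin 2))) + ((1/2 : ℂ)) * (choi Q ((0:Fin 2), (0:Fin 2)) ((1:Fin 2), (1:Fin 2))) + ((-8/9 : ℂ) + (8/9 : ℂ) * Complex.I^2) * (choi R ((1:Fin 2), (1:Fin 2)) ((1:Fin 2), (1:Fin 2))) + ((1/2 : ℂ)) * (choi Q ((0:Fin 2), (1:Fin 2)) ((0:Fin 2), (1:Fin 2))) + ((-1/2 : ℂ)) * (choi Q ((0:Fin 2), (1:Fin 2)) ((1:Fin 2), (0:Fin 2))) + ((8/9 : ℂ) + (-8/9 : ℂ) * Complex.I^2) * (choi Q ((1:Fin 2), (1:Fin 2)) ((1:Fin 2), (1:Fin 2))) + ((-1/2 : ℂ)) * (choi R ((1:Fin 2), (1:Fin 2)) ((0:Fin 2), (0:Fin 2))) + ((-1/2 : ℂ)) * (choi R ((0:Fin 2), (0:Fin 2)) ((1:Fin 2), (1:Fin 2))) + ((-1/2 : ℂ)) * (choi Q ((1:Fin 2), (0:Fin 2)) ((0:Fin 2), (1:Fin 2))) + ((1/2 : ℂ)) * (choi Q ((1:Fin 2), (1:Fin 2)) ((0:Fin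 2), (0:Fin 2)))))) * Complex.I_sq
  have sk1010 : (choi R ((1:Fin 2), (0:Fin 2)) ((0:Fin 2), (1:Fin 2)) - choi Q ((1:Fin 2), (0:Fin 2)) ((0:Fin 2), (1:Fin 2))) + (choi R ((1:Fin 2), (0:Fin 2)) ((0:Fin 2), (1:Fin 2)) - choi Q ((1:Fin 2), (0:Fin 2)) ((0:Fin 2), (1:Fin 2))) = 0 := by
    linear_combination ((-19/64 : ℂ) * Complex.I) * f0 + ((-19/288 : ℂ) * Complex.I) * f1 + ((625/576 : ℂ) + (3125/1008 : ℂ) * Complex.I) * f2 + ((625/576 : ℂ) + (-25/144 : ℂ) * Complex.I) * f3 + ((475/336 : ℂ) * Complex.I) * f4 + ((-625/576 : ℂ) + (8125/8064 : ℂ) * Complex.I) * f5 + ((-625/576 : ℂ) + (-725/1152 : ℂ) * Complex.I) * f6 + ((475/672 : ℂ) * Complex.I) * f7 + ((-81/16 : ℂ) * Complex.I) * f8 + (-((((-1/2 : ℂ)) * (choi Q ((1:Fin 2), (0:Fin 2)) ((1:Fin 2), (0:Fin 2))) + ((1/2 : ℂ)) * (choi R ((0:Fin 2), (1:Fin 2))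 ((0:Fin 2), (1:Fin 2))) + ((-1/4 : ℂ) * Complex.I + (-1/2 : ℂ) * Complex.I^2) * (choi Q ((0:Fin 2), (1:Fin 2)) ((1:Fin 2), (1:Fin 2))) + ((-1/4 : ℂ) * Complex.I + (-1/2 : ℂ) * Complex.I^2) * (choi Q ((1:Fin 2), (1:Fin 2)) ((1:Fin 2), (0:Fin 2))) + ((1/2 : ℂ)) * (choi R ((0:Fin 2), (1:Fin 2)) ((1:Fin 2), (0:Fin 2))) + ((-1/4 : ℂ) * Complex.I + (1/2 : ℂ) * Complex.I^2) * (choi Q ((1:Fin 2), (1:Fin 2)) ((0:Fin 2), (1:Fin 2))) + ((1/2 : ℂ)) * (choi R ((1:Fin 2), (0:Fin 2)) ((1:Fin 2), (0:Fin 2))) + ((-3/2 : ℂ)) * (choi R ((1:Fin 2), (0:Fin 2)) ((0:Fin 2), (1:Fin 2))) + ((-1/2 : ℂ)) * (choi Q ((0:Fin 2), (0:Fin 2)) ((1:Fin 2), (1:Fin 2))) + ((8/9 : ℂ) + (91/288 : ℂ) * Complex.I + (-8/9 : ℂ) * Complex.I^2 + (53/288 : ℂ) * Complex.I^3) * (choi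 R ((1:Fin 2), (1:Fin 2)) ((1:Fin 2), (1:Fin 2))) + ((-1/2 : ℂ)) * (choi Q ((0:Fin 2), (1:Fin 2)) ((0:Fin 2), (1:Fin 2))) + ((-1/4 : ℂ) * Complex.I + (1/2 : ℂ) * Complex.I^2) * (choi Q ((1:Fin 2), (0:Fin 2)) ((1:Fin 2), (1:Fin 2))) + ((-1/2 : ℂ)) * (choi Q ((0:Fin 2), (1:Fin 2)) ((1:Fin 2), (0:Fin 2))) + ((-8/9 : ℂ) + (-91/288 : ℂ) * Complex.I + (8/9 : ℂ) * Complex.I^2 + (-53/288 : ℂ) * Complex.I^3) * (choi Q ((1:Fin 2), (1:Fin 2)) ((1:Fin 2), (1:Fin 2))) + ((1/2 : ℂ)) * (choi R ((1:Fin 2), (1:Fin 2)) ((0:Fin 2), (0:Fin 2))) + ((1/4 : ℂ) * Complex.I + (1/2 : ℂ) * Complex.I^2) * (choi R ((0:Fin 2), (1:Fin 2)) ((1:Fin 2), (1:Fin 2))) + ((1/2 : ℂ)) * (choi R ((0:Fin 2), (0:Fin 2)) ((1:Fin 2), (1:Fin 2))) + ((1/4 : ℂ) * Complex.I + (-1/2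 : ℂ) * Complex.I^2) * (choi R ((1:Fin 2), (0:Fin 2)) ((1:Fin 2), (1:Fin 2))) + ((1/4 : ℂ) * Complex.I + (1/2 : ℂ) * Complex.I^2) * (choi R ((1:Fin 2), (1:Fin 2)) ((1:Fin 2), (0:Fin 2))) + ((3/2 : ℂ)) * (choi Q ((1:Fin 2), (0:Fin 2)) ((0:Fin 2), (1:Fin 2))) + ((-1/2 : ℂ)) * (choi Q ((1:Fin 2), (1:Fin 2)) ((0:Fin 2), (0:Fin 2))) + ((1/4 : ℂ) * Complex.I + (-1/2 : ℂ) * Complex.I^2) * (choi R ((1:Fin 2), (1:Fin 2)) ((0:Fin 2), (1:Fin 2)))))) * Complex.I_sq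
  have sk1011 : (choi R ((1:Fin 2), (1:Fin 2)) ((0:Fin 2), (1:Fin 2)) - choi Q ((1:Fin 2), (1:Fin 2)) ((0:Fin 2), (1:Fin 2))) + (choi R ((1:Fin 2), (0:Fin 2)) ((1:Fin 2), (1:Fin 2)) - choi Q ((1:Fin 2), (0:Fin 2)) ((1:Fin 2), (1:Fin 2))) = 0 := by
    linear_combination ((3/8 : ℂ) + (-3/8 : ℂ) * Complex.I) * f0 + ((-3/8 : ℂ) + (3/8 : ℂ) * Complex.I) * f1 + (625/336 : ℂ) * f2 + (-25/48 : ℂ) * f3 + (-75/56 : ℂ) * f4 + ((-625/336 : ℂ) * Complex.I) * f5 + ((25/48 : ℂ) * Complex.I) * f6 + ((75/56 : ℂ) * Complex.I) * f7 + (-((((-1/2 : ℂ) + (1/2 : ℂ) * Complex.I^2) * (choi Q ((0:Fin 2), (1:Fin 2)) ((1:Fin 2), (1:Fin 2))) + ((-1/2 : ℂ) + (1/2 : ℂ) * Complex.I^2) * (choi Q ((1:Fin 2), (1:Fin 2)) ((1:Fin 2), (0:Fin 2))) + ((1/2 : ℂ) + (-1/2 : ℂ) * Complex.I^2) * (choi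 Q ((1:Fin 2), (1:Fin 2)) ((0:Fin 2), (1:Fin 2))) + ((3/8 : ℂ) * Complex.I + (-3/8 : ℂ) * Complex.I^3) * (choi R ((1:Fin 2), (1:Fin 2)) ((1:Fin 2), (1:Fin 2))) + ((1/2 : ℂ) + (-1/2 : ℂ) * Complex.I^2) * (choi Q ((1:Fin 2), (0:Fin 2)) ((1:Fin 2), (1:Fin 2))) + ((-3/8 : ℂ) * Complex.I + (3/8 : ℂ) * Complex.I^3) * (choi Q ((1:Fin 2), (1:Fin 2)) ((1:Fin 2), (1:Fin 2))) + ((1/2 : ℂ) + (-1/2 : ℂ) * Complex.I^2) * (choi R ((0:Fin 2), (1:Fin 2)) ((1:Fin 2), (1:Fin 2))) + ((-1/2 : ℂ) + (1/2 : ℂ) * Complex.I^2) * (choi R ((1:Fin 2), (0:Fin 2)) ((1:Fin 2), (1:Fin 2))) + ((1/2 : ℂ) + (-1/2 : ℂ) * Complex.I^2) * (choi R ((1:Fin 2), (1:Fin 2)) ((1:Fin 2), (0:Fin 2))) + ((-1/2 : ℂ) + (1/2 : ℂ) * Complex.I^2) * (choi R ((1:Fin 2), (1:Fin 2)) ((0:Fin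 2), (1:Fin 2)))))) * Complex.I_sq
  have sk1100 : (choi R ((1:Fin 2), (0:Fin 2)) ((1:Fin 2), (0:Fin 2)) - choi Q ((1:Fin 2), (0:Fin 2)) ((1:Fin 2), (0:Fin 2))) + (choi R ((0:Fin 2), (1:Fin 2)) ((0:Fin 2), (1:Fin 2)) - choi Q ((0:Fin 2), (1:Fin 2)) ((0:Fin 2), (1:Fin 2))) = 0 := by
    linear_combination (1 : ℂ) * tpD 0 0 + (1 : ℂ) * tpD 1 1 + (-1 : ℂ) * f0 + (-1 : ℂ) * f1
  have sk1101 : (choi R ((1:Fin 2), (1:Fin 2)) ((1:Fin 2), (0:Fin 2)) - choi Q ((1:Fin 2), (1:Fin 2)) ((1:Fin 2), (0:Fin 2))) + (choi R ((0:Fin 2), (1:Fin 2)) ((1:Fin 2), (1:Fin 2)) - choi Q ((0:Fin 2), (1:Fin 2)) ((1:Fin 2), (1:Fin 2))) = 0 := by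
    linear_combination ((3/8 : ℂ) + (3/8 : ℂ) * Complex.I) * f0 + ((-3/8 : ℂ) + (-3/8 : ℂ) * Complex.I) * f1 + (625/336 : ℂ) * f2 + (-25/48 : ℂ) * f3 + (-75/56 : ℂ) * f4 + ((625/336 : ℂ) * Complex.I) * f5 + ((-25/48 : ℂ) * Complex.I) * f6 + ((-75/56 : ℂ) * Complex.I) * f7 + (-((((1/2 : ℂ) + (-1/2 : ℂ) * Complex.I^2) * (choi Q ((0:Fin 2), (1:Fin 2)) ((1:Fin 2), (1:Fin 2))) + ((1/2 : ℂ) + (-1/2 : ℂ) * Complex.I^2) * (choi Q ((1:Fin 2), (1:Fin 2)) ((1:Fin 2), (0:Fin 2))) + ((-1/2 : ℂ) + (1/2 : ℂ) * Complex.I^2) * (choi Q ((1:Fin 2), (1:Fin 2)) ((0:Fin 2), (1:Fin 2))) + ((-3/8 : ℂ) * Complex.I + (3/8 : ℂ) * Complex.I^3) * (choi R ((1:Fin 2), (1:Fin 2)) ((1:Fin 2), (1:Fin 2))) + ((-1/2 : ℂ) + (1/2 : ℂ) * Complex.I^2) * (choi Q ((1:Fin 2), (0:Fin 2)) ((1:Fin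 2), (1:Fin 2))) + ((3/8 : ℂ) * Complex.I + (-3/8 : ℂ) * Complex.I^3) * (choi Q ((1:Fin 2), (1:Fin 2)) ((1:Fin 2), (1:Fin 2))) + ((-1/2 : ℂ) + (1/2 : ℂ) * Complex.I^2) * (choi R ((0:Fin 2), (1:Fin 2)) ((1:Fin 2), (1:Fin 2))) + ((1/2 : ℂ) + (-1/2 : ℂ) * Complex.I^2) * (choi R ((1:Fin 2), (0:Fin 2)) ((1:Fin 2), (1:Fin 2))) + ((-1/2 : ℂ) + (1/2 : ℂ) * Complex.I^2) * (choi R ((1:Fin 2), (1:Fin 2)) ((1:Fin 2), (0:Fin 2))) + ((1/2 : ℂ) + (-1/2 : ℂ) * Complex.I^2) * (choi R ((1:Fin 2), (1:Fin 2)) ((0:Fin 2), (1:Fin 2)))))) * Complex.I_sq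
  have sk1110 : (choi R ((1:Fin 2), (0:Fin 2)) ((1:Fin 2), (1:Fin 2)) - choi Q ((1:Fin 2), (0:Fin 2)) ((1:Fin 2), (1:Fin 2))) + (choi R ((1:Fin 2), (1:Fin 2)) ((0:Fin 2), (1:Fin 2)) - choi Q ((1:Fin 2), (1:Fin 2)) ((0:Fin 2), (1:Fin 2))) = 0 := by
    linear_combination ((3/8 : ℂ) + (-3/8 : ℂ) * Complex.I) * f0 + ((-3/8 : ℂ) + (3/8 : ℂ) * Complex.I) * f1 + (625/336 : ℂ) * f2 + (-25/48 : ℂ) * f3 + (-75/56 : ℂ) * f4 + ((-625/336 : ℂ) * Complex.I) * f5 + ((25/48 : ℂ) * Complex.I) * f6 + ((75/56 : ℂ) * Complex.I) * f7 + (-((((-1/2 : ℂ) + (1/2 : ℂ) * Complex.I^2) * (choi Q ((0:Fin 2), (1:Fin 2)) ((1:Fin 2), (1:Fin 2))) + ((-1/2 : ℂ) + (1/2 : ℂ) * Complex.I^2) * (choi Q ((1:Fin 2), (1:Fin 2)) ((1:Fin 2), (0:Fin 2))) + ((1/2 : ℂ) + (-1/2 : ℂ) * Complex.I^2) * (choi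 Q ((1:Fin 2), (1:Fin 2)) ((0:Fin 2), (1:Fin 2))) + ((3/8 : ℂ) * Complex.I + (-3/8 : ℂ) * Complex.I^3) * (choi R ((1:Fin 2), (1:Fin 2)) ((1:Fin 2), (1:Fin 2))) + ((1/2 : ℂ) + (-1/2 : ℂ) * Complex.I^2) * (choi Q ((1:Fin 2), (0:Fin 2)) ((1:Fin 2), (1:Fin 2))) + ((-3/8 : ℂ) * Complex.I + (3/8 : ℂ) * Complex.I^3) * (choi Q ((1:Fin 2), (1:Fin 2)) ((1:Fin 2), (1:Fin 2))) + ((1/2 : ℂ) + (-1/2 : ℂ) * Complex.I^2) * (choi R ((0:Fin 2), (1:Fin 2)) ((1:Fin 2), (1:Fin 2))) + ((-1/2 : ℂ) + (1/2 : ℂ) * Complex.I^2) * (choi R ((1:Fin 2), (0:Fin 2)) ((1:Fin 2), (1:Fin 2))) + ((1/2 : ℂ) + (-1/2 : ℂ) * Complex.I^2) * (choi R ((1:Fin 2), (1:Fin 2)) ((1:Fin 2), (0:Fin 2))) + ((-1/2 : ℂ) + (1/2 : ℂ) * Complex.I^2) * (choi R ((1:Fin 2), (1:Fin 2)) ((0:Fin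 2), (1:Fin 2)))))) * Complex.I_sq
  have sk1111 : (choi R ((1:Fin 2), (1:Fin 2)) ((1:Fin 2), (1:Fin 2)) - choi Q ((1:Fin 2), (1:Fin 2)) ((1:Fin 2), (1:Fin 2))) + (choi R ((1:Fin 2), (1:Fin 2)) ((1:Fin 2), (1:Fin 2)) - choi Q ((1:Fin 2), (1:Fin 2)) ((1:Fin 2), (1:Fin 2))) = 0 := by
    linear_combination (2 : ℂ) * f1
  have skewMap : ∀ X Y : Matrix (Fin 2) (Fin 2) ℂ,
      ((R - Q) X * Y).trace + (X * (R - Q) Y).trace = 0 := by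
    intro X Y
    simp only [LinearMap.sub_apply]
    rw [Matrix.sub_mul, Matrix.mul_sub, Matrix.trace_sub, Matrix.trace_sub,
      traceL R, traceL Q, traceR R, traceR Q]
    simp only [Fin.sum_univ_two]
    linear_combination (X 0 0 * Y 0 0) * sk0000 + (X 0 0 * Y 0 1) * sk0001 + (X 0 0 * Y 1 0) * sk0010 + (X 0 0 * Y 1 1) * sk0011 + (X 0 1 * Y 0 0) * sk0100 + (X 0 1 * Y 0 1) * sk0101 + (X 0 1 * Y 1 0) * sk0110 + (X 0 1 * Y 1 1) * sk0111 + (X 1 0 * Y 0 0) * sk1000 + (X 1 0 * Y 0 1) * sk1001 + (X 1 0 * Y 1 0) * sk1010 + (X 1 0 * Y 1 1) * sk1011 + (X 1 1 * Y 0 0) * sk1100 + (X 1 1 * Y 0 1) * sk1101 + (X 1 1 * Y 1 0) * sk1110 + (X 1 1 * Y 1 1) * sk1111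
  -- trace of the difference vanishes
  have hDtr : ∀ X : Matrix (Fin 2) (Fin 2) ℂ, ((R - Q) X).trace = 0 := by
    intro X
    simp only [LinearMap.sub_apply, Matrix.trace_sub]
    rw [hRtp X, hQtp X, sub_self]
  -- the difference annihilates the identity
  have hD1 : (R - Q) (1 : Matrix (Fin 2) (Fin 2) ℂ) = 0 := by
    ext a b
    have h := skewMap (Matrix.single b a 1) 1
    rw [Matrix.mul_one, hDtr, zero_add, trace_stdBasisMatrix_mul] at h
    simpa using h
  -- trace of choi Q
  have htrCQ : (choi Q).trace = 2 := by
    have h0 := hQtp (Matrix.single (0:Fin 2) 0 1)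
    have h1 := hQtp (Matrix.single (1:Fin 2) 1 1)
    simp only [Matrix.trace, Matrix.diag, Fin.sum_univ_two, ← choi_apply'] at h0 h1
    simp only [Matrix.single, Matrix.of_apply] at h0 h1
    norm_num at h0 h1
    simp only [Matrix.trace, Matrix.diag, Fintype.sum_prod_type, Fin.sum_univ_two]
    linear_combination h0 + h1
  -- now build the channel
  refine ⟨2, by norm_num, dep2 + (4⁻¹:ℂ) • (R - Q), dep2 - (4⁻¹:ℂ) • (R - Q),
    ⟨?_, ?_⟩, ?_, ?_, ?_⟩
  · -- complete positivity
    rw [IsCP, choi_addsm, choi_subD, choi_dep2]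
    have hkey : (2⁻¹ : ℂ) • (1 : Matrix (Fin 2 × Fin 2) (Fin 2 × Fin 2) ℂ)
        + (4⁻¹:ℂ) • (choi R - choi Q)
        = ((4⁻¹:ℝ):ℂ) • choi R + ((4⁻¹:ℝ):ℂ) • ((2:ℂ) • 1 - choi Q) := by
      ext p q
      simp only [Matrix.add_apply, Matrix.smul_apply, Matrix.sub_apply, Matrix.one_apply,
        smul_eq_mul]
      push_cast
      ring
    rw [hkey]
    apply Matrix.PosSemidef.add
    · exact psd_smul 4⁻¹ (by norm_num) hRcp
    · apply psd_smul 4⁻¹ (by norm_num)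
      have := psd_trace_sub hQcp
      rwa [htrCQ] at this
  · -- trace preservation
    intro X
    simp only [LinearMap.add_apply, LinearMap.smul_apply]
    rw [Matrix.trace_add, Matrix.trace_smul, hDtr, smul_zero, add_zero, dep2_apply,
      Matrix.trace_smul, Matrix.trace_one]
    simp only [Fintype.card_fin, smul_eq_mul, Nat.cast_ofNat]
    ring
  · -- unitality
    simp only [LinearMap.add_apply, LinearMap.smul_apply, hD1, smul_zero, add_zero,
      dep2_apply, Matrix.trace_one]
    norm_num
  · -- duality
    intro X Y
    have hs := skewMap X Y
    have e1 : (dep2 + (4⁻¹:ℂ) • (R - Q)) X * Y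
        = (X.trace/2) • Y + (4⁻¹:ℂ) • ((R - Q) X * Y) := by
      simp only [LinearMap.add_apply, LinearMap.smul_apply, dep2_apply]
      rw [Matrix.add_mul, Matrix.smul_mul, Matrix.smul_mul, Matrix.one_mul]
    have e2 : X * (dep2 - (4⁻¹:ℂ) • (R - Q)) Y
        = (Y.trace/2) • X - (4⁻¹:ℂ) • (X * ((R - Q) Y)) := by
      simp only [LinearMap.sub_apply, LinearMap.smul_apply, dep2_apply]
      rw [Matrix.mul_sub, Matrix.mul_smul, Matrix.mul_smul, Matrix.mul_one]
    rw [e1, e2, Matrix.trace_add, Matrix.trace_sub, Matrix.trace_smul, Matrix.trace_smul,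
      Matrix.trace_smul, Matrix.trace_smul]
    simp only [smul_eq_mul]
    linear_combination (4⁻¹:ℂ) * hs
  · -- the decomposition
    apply LinearMap.ext
    intro X
    simp only [LinearMap.add_apply, LinearMap.smul_apply, LinearMap.sub_apply, dep2_apply]
    rw [show ((2:ℝ):ℂ) = (2:ℂ) from by norm_num]
    module
end
end

section
/- Let Q, R: L(H_3) → L(H_3) be quantum channels with Q(I) = R(I) and equal gate fidelity. Then there exist r ≥ 0 and a unital quantum channel E: L(H_3) → L(H_3) such that R = Q + r(E − E†). -/
open Matrix BigOperators
open scoped ComplexOrder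

noncomputable section

def L4 (S : Fin 3 → Fin 3 → Fin 3 → Fin 3 → ℂ) (p q r s : Fin 3 → ℂ) : ℂ :=
  ∑ a, ∑ b, ∑ c, ∑ d, p a * q b * r c * s d * S a b c d

lemma L4_1 (S) (p q y z w : Fin 3 → ℂ) (c : ℂ) :
    L4 S (p + c • q) y z w = L4 S p y z w + c * L4 S q y z w := by
  simp only [L4, Fin.sum_univ_three, Pi.add_apply, Pi.smul_apply, smul_eq_mul]; ring

lemma L4_2 (S) (p q y z w : Fin 3 → ℂ) (c : ℂ) :
    L4 S y (p + c • q) z w = L4 S y p z w + c * L4 S y q z w := by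
  simp only [L4, Fin.sum_univ_three, Pi.add_apply, Pi.smul_apply, smul_eq_mul]; ring

lemma L4_3 (S) (p q y z w : Fin 3 → ℂ) (c : ℂ) :
    L4 S y z (p + c • q) w = L4 S y z p w + c * L4 S y z q w := by
  simp only [L4, Fin.sum_univ_three, Pi.add_apply, Pi.smul_apply, smul_eq_mul]; ring

lemma L4_4 (S) (p q y z w : Fin 3 → ℂ) (c : ℂ) :
    L4 S y z w (p + c • q) = L4 S y z w p + c * L4 S y z w q := by
  simp only [L4, Fin.sum_univ_three, Pi.add_apply, Pi.smul_apply, smul_eq_mul]; ring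

lemma star_add_smul (c : ℂ) (u v : Fin 3 → ℂ) :
    star (u + c • v) = star u + (starRingEnd ℂ c) • star v := by
  funext i
  simp [Pi.star_apply, Pi.add_apply, Pi.smul_apply, smul_eq_mul, map_add, _root_.map_mul]

lemma stage1 (S : Fin 3 → Fin 3 → Fin 3 → Fin 3 → ℂ)
    (h : ∀ φ : Fin 3 → ℂ, L4 S φ (star φ) (star φ) φ = 0) (u v : Fin 3 → ℂ) :
    L4 S v (star v) (star u) u + L4 S v (star u) (star v) u
      + L4 S u (star v) (star u) v + L4 S u (star u) (star v) v = 0 := by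
  have e0 := h u
  have mk : ∀ c c' : ℂ, (starRingEnd ℂ c) = c' →
      L4 S (u + c • v) (star u + c' • star v) (star u + c' • star v) (u + c • v) = 0 := by
    intro c c' hc
    have := h (u + c • v)
    rwa [star_add_smul, hc] at this
  have e1 := mk 1 1 (by simp)
  have em1 := mk (-1) (-1) (by simp)
  have e2 := mk 2 2 (map_ofNat _ 2)
  have em2 := mk (-2) (-2) (by rw [map_neg, map_ofNat])
  have ei := mk Complex.I (-Complex.I) (by simp)
  have emi := mk (-Complex.I) Complex.I (by simp)
  simp only [L4_1, L4_2, L4_3, L4_4] at e1 em1 e2 em2 ei emi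
  linear_combination (-5/4 : ℂ) * e0 + (5/12 : ℂ) * e1 + (5/12 : ℂ) * em1
    - (1/24 : ℂ) * e2 - (1/24 : ℂ) * em2 + (1/4 : ℂ) * ei + (1/4 : ℂ) * emi
    + (- (1/2 : ℂ) * (L4 S v (star u) (star u) v + L4 S u (star v) (star v) u)
      + (1/2 : ℂ) * (L4 S v (star v) (star u) u + L4 S v (star u) (star v) u
          + L4 S u (star v) (star u) v + L4 S u (star u) (star v) v)
      + ((1 - Complex.I * Complex.I)/2) * (L4 S v (star v) (star v) v)) * Complex.I_mul_I

lemma stage2 (S : Fin 3 → Fin 3 → Fin 3 → Fin 3 → ℂ)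
    (h : ∀ φ : Fin 3 → ℂ, L4 S φ (star φ) (star φ) φ = 0) (p q v : Fin 3 → ℂ) :
    L4 S v (star v) (star p) q + L4 S v (star p) (star v) q
      + L4 S q (star v) (star p) v + L4 S q (star p) (star v) v = 0 := by
  have mk : ∀ c c' : ℂ, (starRingEnd ℂ c) = c' →
      L4 S v (star v) (star p + c' • star q) (p + c • q)
        + L4 S v (star p + c' • star q) (star v) (p + c • q)
        + L4 S (p + c • q) (star v) (star p + c' • star q) v
        + L4 S (p + c • q) (star p + c' • star q) (star v) v = 0 := by
    intro c c' hc
    have := stage1 S h (p + c • q) v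
    rwa [star_add_smul, hc] at this
  have f1 := mk 1 1 (by simp)
  have fm1 := mk (-1) (-1) (by simp)
  have fi := mk Complex.I (-Complex.I) (by simp)
  simp only [L4_1, L4_2, L4_3, L4_4] at f1 fm1 fi
  linear_combination ((1 + Complex.I)/4) * f1 + ((-1 + Complex.I)/4) * fm1
    + (-Complex.I/2) * fi
    + ((1/2 : ℂ) * (L4 S v (star v) (star p) q + L4 S v (star p) (star v) q
          + L4 S q (star v) (star p) v + L4 S q (star p) (star v) v)
      - (1/2 : ℂ) * (L4 S v (star v) (star q) p + L4 S v (star q) (star v) p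
          + L4 S p (star v) (star q) v + L4 S p (star q) (star v) v)
      - (Complex.I/2) * (L4 S v (star v) (star q) q + L4 S v (star q) (star v) q
          + L4 S q (star v) (star q) v + L4 S q (star q) (star v) v)) * Complex.I_mul_I

lemma stage3 (S : Fin 3 → Fin 3 → Fin 3 → Fin 3 → ℂ)
    (h : ∀ φ : Fin 3 → ℂ, L4 S φ (star φ) (star φ) φ = 0) (p q r w : Fin 3 → ℂ) :
    L4 S w (star r) (star p) q + L4 S w (star p) (star r) q
      + L4 S q (star r) (star p) w + L4 S q (star p) (star r) w = 0 := by
  have mk : ∀ c c' : ℂ, (starRingEnd ℂ c) = c' →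
      L4 S (r + c • w) (star r + c' • star w) (star p) q
        + L4 S (r + c • w) (star p) (star r + c' • star w) q
        + L4 S q (star r + c' • star w) (star p) (r + c • w)
        + L4 S q (star p) (star r + c' • star w) (r + c • w) = 0 := by
    intro c c' hc
    have := stage2 S h p q (r + c • w)
    rwa [star_add_smul, hc] at this
  have f1 := mk 1 1 (by simp)
  have fm1 := mk (-1) (-1) (by simp)
  have fi := mk Complex.I (-Complex.I) (by simp)
  simp only [L4_1, L4_2, L4_3, L4_4] at f1 fm1 fi
  linear_combination ((1 + Complex.I)/4) * f1 + ((-1 + Complex.I)/4) * fm1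
    + (-Complex.I/2) * fi
    + ((1/2 : ℂ) * (L4 S w (star r) (star p) q + L4 S w (star p) (star r) q
          + L4 S q (star r) (star p) w + L4 S q (star p) (star r) w)
      - (1/2 : ℂ) * (L4 S r (star w) (star p) q + L4 S r (star p) (star w) q
          + L4 S q (star w) (star p) r + L4 S q (star p) (star w) r)
      - (Complex.I/2) * (L4 S w (star w) (star p) q + L4 S w (star p) (star w) q
          + L4 S q (star w) (star p) w + L4 S q (star p) (star w) w)) * Complex.I_mul_I

lemma star_stdV (i : Fin 3) : star (stdV 3 i) = stdV 3 i := by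
  funext j
  simp [stdV, Pi.single_apply, Pi.star_apply, apply_ite]

lemma L4_basis (S : Fin 3 → Fin 3 → Fin 3 → Fin 3 → ℂ) (a b c d : Fin 3) :
    L4 S (stdV 3 a) (stdV 3 b) (stdV 3 c) (stdV 3 d) = S a b c d := by
  simp [L4, stdV, Pi.single_apply, mul_ite, ite_mul, one_mul, zero_mul, mul_one, mul_zero,
    Finset.sum_ite_eq', Finset.mem_univ]

lemma extract (S : Fin 3 → Fin 3 → Fin 3 → Fin 3 → ℂ)
    (h : ∀ φ : Fin 3 → ℂ, L4 S φ (star φ) (star φ) φ = 0) (w x y z : Fin 3) :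
    S w x y z + S w y x z + S z x y w + S z y x w = 0 := by
  have := stage3 S h (stdV 3 y) (stdV 3 z) (stdV 3 x) (stdV 3 w)
  simp only [star_stdV, L4_basis] at this
  exact this

lemma keyLemma (g : Fin 3 → Fin 3 → Fin 3 → Fin 3 → ℂ)
    (hsym : ∀ a b c d, g a b c d + g a c b d = 0)
    (hsym2 : ∀ a b c d, g a b c d + g d b c a = 0)
    (htr : ∀ p q, g 0 p 0 q + g 1 p 1 q + g 2 p 2 q = 0) :
    ∀ a b c d, g a b c d = 0 := by
  have hbc : ∀ a b d, g a b b d = 0 := fun a b d => by linear_combination (hsym a b b d) / 2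
  have had : ∀ a b c, g a b c a = 0 := fun a b c => by linear_combination (hsym2 a b c a) / 2
  have hswap : ∀ a b c d, g a b c d = g d c b a := fun a b c d => by
    linear_combination hsym2 a b c d - hsym d b c a
  have d01 : g 0 1 0 1 = 0 := by
    linear_combination (htr 1 1 + htr 0 0 - htr 2 2) / 2 - (hsym 1 1 1 1) / 4
      - (hsym 0 0 0 0) / 4 + (hsym 2 2 2 2) / 4 - (hswap 1 0 1 0) / 2
      - (hswap 2 1 2 1) / 2 - (hswap 2 0 2 0) / 2
  have d02 : g 0 2 0 2 = 0 := by
    linear_combination (htr 2 2 + htr 0 0 - htr 1 1) / 2 - (hsym 2 2 2 2) / 4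
      - (hsym 0 0 0 0) / 4 + (hsym 1 1 1 1) / 4 - (hswap 2 0 2 0) / 2
      - (hswap 1 2 1 2) / 2 - (hswap 1 0 1 0) / 2
  have d12 : g 1 2 1 2 = 0 := by
    linear_combination (htr 2 2 + htr 1 1 - htr 0 0) / 2 - (hsym 2 2 2 2) / 4
      - (hsym 1 1 1 1) / 4 + (hsym 0 0 0 0) / 4 - (hswap 2 1 2 1) / 2
      - (hswap 0 2 0 2) / 2 - (hswap 0 1 0 1) / 2
  have hdiag : ∀ m p, g m p m p = 0 := by
    intro m p
    fin_cases m <;> fin_cases p <;>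
      first
        | exact hbc _ _ _
        | exact d01
        | exact d02
        | exact d12
        | exact (hswap 1 0 1 0).trans d01
        | exact (hswap 2 0 2 0).trans d02
        | exact (hswap 2 1 2 1).trans d12
  have hm012 : g 0 1 0 2 = 0 := by
    linear_combination htr 1 2 - (hsym 1 1 1 2) / 2 - (hsym2 2 1 2 2) / 2
  have hm021 : g 0 2 0 1 = 0 := by
    linear_combination htr 2 1 - (hsym 2 2 2 1) / 2 - (hsym2 1 2 1 1) / 2
  have hm102 : g 1 0 1 2 = 0 := by
    linear_combination htr 0 2 - (hsym 0 0 0 2) / 2 - (hsym2 2 0 2 2) / 2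
  have hm120 : g 1 2 1 0 = 0 := by
    linear_combination htr 2 0 - (hsym 2 2 2 0) / 2 - (hsym2 0 2 0 0) / 2
  have hm201 : g 2 0 2 1 = 0 := by
    linear_combination htr 0 1 - (hsym 0 0 0 1) / 2 - (hsym2 1 0 1 1) / 2
  have hm210 : g 2 1 2 0 = 0 := by
    linear_combination htr 1 0 - (hsym 1 1 1 0) / 2 - (hsym2 0 1 0 0) / 2
  have hmain : ∀ m p q : Fin 3, m ≠ p → m ≠ q → p ≠ q → g m p m q = 0 := by
    intro m p q h1 h2 h3
    fin_cases m <;> fin_cases p <;> fin_cases q <;>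
      first
        | exact absurd rfl h1
        | exact absurd rfl h2
        | exact absurd rfl h3
        | exact hm012
        | exact hm021
        | exact hm102
        | exact hm120
        | exact hm201
        | exact hm210
  intro a b c d
  by_cases hB : b = c
  · subst hB; exact hbc a b d
  by_cases hA : a = d
  · subst hA; exact had a b c
  by_cases h1 : a = c
  · subst h1
    by_cases h2 : b = d
    · subst h2; exact hdiag a b
    · exact hmain a b d (fun h => hB h.symm) hA h2
  by_cases h3 : a = b
  · subst h3
    have hz : g a c a d = 0 := by
      by_cases h4 : c = d
      · subst h4; exact hdiag a c
      · exact hmain a c d h1 hA h4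
    linear_combination hsym a a c d - hz
  by_cases h4 : d = c
  · subst h4
    have hz : g d b d a = 0 := hmain d b a (fun h => hB h.symm) (fun h => h1 h.symm)
      (fun h => h3 h.symm)
    linear_combination hsym2 a b d d - hz
  by_cases h5 : d = b
  · subst h5
    exact (hswap a d c d).trans (hmain d c a (fun h => h4 h) (fun h => hA h.symm)
      (fun h => h1 h.symm))
  · exfalso
    have n1 : a.val ≠ b.val := fun h => h3 (Fin.ext h)
    have n2 : a.val ≠ c.val := fun h => h1 (Fin.ext h)
    have n3 : a.val ≠ d.val := fun h => hA (Fin.ext h)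
    have n4 : d.val ≠ c.val := fun h => h4 (Fin.ext h)
    have n5 : d.val ≠ b.val := fun h => h5 (Fin.ext h)
    have n6 : b.val ≠ c.val := fun h => hB (Fin.ext h)
    have va := a.isLt; have vb := b.isLt; have vc := c.isLt; have vd := d.isLt
    omega

lemma apply_entry {n : ℕ} (Λ : MatMap n) (X : Matrix (Fin n) (Fin n) ℂ) (b d : Fin n) :
    Λ X b d = ∑ a, ∑ c, X a c * choi Λ (a, b) (c, d) := by
  conv_lhs => rw [matrix_eq_sum_single X]
  rw [map_sum]
  simp only [Matrix.sum_apply]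
  refine Finset.sum_congr rfl fun a _ => ?_
  rw [map_sum]
  simp only [Matrix.sum_apply]
  refine Finset.sum_congr rfl fun c _ => ?_
  have : Matrix.single a c (X a c) = X a c • Matrix.single a c (1 : ℂ) := by
    rw [Matrix.smul_single, smul_eq_mul, mul_one]
  rw [this, _root_.map_smul]
  simp [choi]

lemma fid_eq_L4 (Λ : MatMap 3) (φ : Fin 3 → ℂ) :
    fid Λ φ = L4 (fun a b c d => choi Λ (a, b) (c, d)) φ (star φ) (star φ) φ := by
  unfold fid qf L4
  simp only [dotProduct, mulVec]
  simp only [apply_entry Λ (ketbra φ)]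
  simp only [ketbra, Matrix.vecMulVec_apply, Pi.star_apply]
  simp only [Fin.sum_univ_three]
  ring

lemma fid_smul (Λ : MatMap 3) (φ : Fin 3 → ℂ) (t : ℝ) :
    fid Λ ((t : ℂ) • φ) = (t : ℂ) ^ 4 * fid Λ φ := by
  rw [fid_eq_L4, fid_eq_L4]
  have hs : star ((t : ℂ) • φ) = (t : ℂ) • star φ := by
    funext i
    simp [Pi.smul_apply, Pi.star_apply, smul_eq_mul, _root_.map_mul, Complex.conj_ofReal]
  rw [hs]
  simp only [L4, Pi.smul_apply, smul_eq_mul, Fin.sum_univ_three]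
  ring

lemma dot_eq_normSq (φ : Fin 3 → ℂ) :
    star φ ⬝ᵥ φ = ((∑ i, Complex.normSq (φ i) : ℝ) : ℂ) := by
  simp only [dotProduct, Pi.star_apply, Complex.ofReal_sum]
  exact Finset.sum_congr rfl fun i _ => (Complex.normSq_eq_conj_mul_self).symm ▸ rfl

lemma fid_all_eq (Q R : MatMap 3)
    (hfid : ∀ φ : Fin 3 → ℂ, unitv φ → fid Q φ = fid R φ) :
    ∀ φ : Fin 3 → ℂ, fid Q φ = fid R φ := by
  intro φ
  by_cases h0 : φ = 0
  · subst h0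
    have hk : ketbra (0 : Fin 3 → ℂ) = 0 := by
      ext i j; simp [ketbra, Matrix.vecMulVec_apply]
    simp [fid, qf, hk, map_zero]
  · set nφ : ℝ := ∑ i, Complex.normSq (φ i) with hn
    have hnpos : 0 < nφ := by
      have : ∃ i, φ i ≠ 0 := by
        by_contra hc
        push_neg at hc
        exact h0 (funext fun i => hc i)
      obtain ⟨i, hi⟩ := this
      have h1 : 0 < Complex.normSq (φ i) := Complex.normSq_pos.mpr hi
      have h2 : ∀ j ∈ Finset.univ, 0 ≤ Complex.normSq (φ j) := fun j _ => Complex.normSq_nonneg _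
      calc (0:ℝ) < Complex.normSq (φ i) := h1
        _ ≤ nφ := Finset.single_le_sum h2 (Finset.mem_univ i)
    set s : ℝ := Real.sqrt nφ with hsdef
    have hspos : 0 < s := Real.sqrt_pos.mpr hnpos
    have hs2 : s ^ 2 = nφ := Real.sq_sqrt hnpos.le
    obtain ⟨ψ, hψ⟩ : ∃ ψ : Fin 3 → ℂ, ψ = ((s⁻¹ : ℝ) : ℂ) • φ := ⟨_, rfl⟩
    have hφψ : φ = ((s : ℝ) : ℂ) • ψ := by
      rw [hψ, smul_smul]
      rw [show ((s:ℝ):ℂ) * ((s⁻¹:ℝ):ℂ) = 1 by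
        rw [← Complex.ofReal_mul, mul_inv_cancel₀ hspos.ne', Complex.ofReal_one]]
      rw [one_smul]
    have hunit : unitv ψ := by
      unfold unitv
      rw [hψ]
      have hst : star (((s⁻¹ : ℝ) : ℂ) • φ) = ((s⁻¹ : ℝ) : ℂ) • star φ := by
        funext i
        simp [Pi.smul_apply, Pi.star_apply, smul_eq_mul, _root_.map_mul, Complex.conj_ofReal]
      rw [hst, smul_dotProduct, dotProduct_smul, dot_eq_normSq, ← hn, smul_eq_mul, smul_eq_mul]
      rw [← Complex.ofReal_mul, ← Complex.ofReal_mul]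
      norm_cast
      field_simp
      rw [← hs2]
    rw [hφψ, fid_smul, fid_smul, hfid ψ hunit]

section PSD
variable {m : Type*} [Fintype m] [DecidableEq m]
set_option linter.unusedSectionVars false

lemma herm_qf_real (C : Matrix m m ℂ) (hC : C.IsHermitian) (x : m → ℂ) :
    (starRingEnd ℂ) (star x ⬝ᵥ C *ᵥ x) = star x ⬝ᵥ C *ᵥ x := by
  have hentry : ∀ p q, (starRingEnd ℂ) (C p q) = C q p := by
    intro p q
    have := congrFun (congrFun hC q) p
    simpa [Matrix.conjTranspose_apply] using this
  simp only [dotProduct, mulVec, Pi.star_apply, Complex.star_def, map_sum, _root_.map_mul,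
    Complex.conj_conj, Finset.mul_sum]
  rw [Finset.sum_comm]
  refine Finset.sum_congr rfl fun q _ => Finset.sum_congr rfl fun p _ => ?_
  rw [hentry]
  ring

lemma qf_abs_le (C : Matrix m m ℂ) (x : m → ℂ) :
    ‖star x ⬝ᵥ C *ᵥ x‖
      ≤ (∑ p, ∑ q, ‖C p q‖) * (∑ i, Complex.normSq (x i)) := by
  have hxn : ∀ i, ‖x i‖ ^ 2 ≤ ∑ i, Complex.normSq (x i) := by
    intro i
    rw [Complex.sq_norm]
    exact Finset.single_le_sum (fun j _ => Complex.normSq_nonneg _) (Finset.mem_univ i)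
  set n : ℝ := ∑ i, Complex.normSq (x i) with hn
  have hprod : ∀ p q, ‖x p‖ * ‖x q‖ ≤ n := by
    intro p q
    nlinarith [hxn p, hxn q, sq_nonneg (‖x p‖ - ‖x q‖),
      norm_nonneg (x p), norm_nonneg (x q)]
  calc ‖star x ⬝ᵥ C *ᵥ x‖
      ≤ ∑ p, ‖(star x) p * (C *ᵥ x) p‖ := norm_sum_le _ _
    _ ≤ ∑ p, ∑ q, ‖C p q‖ * (‖x p‖ * ‖x q‖) := by
        refine Finset.sum_le_sum fun p _ => ?_
        rw [norm_mul]
        calc ‖(star x) p‖ * ‖(C *ᵥ x) p‖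
            ≤ ‖(star x) p‖ * ∑ q, ‖C p q * x q‖ := by
              refine mul_le_mul_of_nonneg_left (norm_sum_le _ _) (norm_nonneg _)
          _ = ∑ q, ‖C p q‖ * (‖x p‖ * ‖x q‖) := by
              rw [Finset.mul_sum]
              refine Finset.sum_congr rfl fun q _ => ?_
              simp only [Pi.star_apply, Complex.star_def, norm_mul, Complex.norm_conj]
              ring
    _ ≤ ∑ p, ∑ q, ‖C p q‖ * n := by
        refine Finset.sum_le_sum fun p _ => Finset.sum_le_sum fun q _ => ?_
        exact mul_le_mul_of_nonneg_left (hprod p q) (norm_nonneg _)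
    _ = (∑ p, ∑ q, ‖C p q‖) * n := by
        rw [Finset.sum_mul]
        exact Finset.sum_congr rfl fun p _ => (Finset.sum_mul _ _ _).symm

lemma psd_shift (C : Matrix m m ℂ) (hC : C.IsHermitian) (ε : ℝ)
    (hbound : |ε| * (∑ p, ∑ q, ‖C p q‖) ≤ 3⁻¹) :
    ((((3:ℝ)⁻¹ : ℝ) : ℂ) • (1 : Matrix m m ℂ) + ((ε : ℝ) : ℂ) • C).PosSemidef := by
  refine Matrix.posSemidef_iff_dotProduct_mulVec.mpr ⟨?_, ?_⟩
  · unfold Matrix.IsHermitian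
    rw [Matrix.conjTranspose_add, Matrix.conjTranspose_smul, Matrix.conjTranspose_smul,
      Matrix.conjTranspose_one, Complex.star_def, Complex.conj_ofReal, Complex.conj_ofReal, hC]
  · intro x
    have hqf : star x ⬝ᵥ ((((3:ℝ)⁻¹ : ℝ) : ℂ) • (1 : Matrix m m ℂ) + ((ε : ℝ) : ℂ) • C) *ᵥ x
        = (((3:ℝ)⁻¹ : ℝ) : ℂ) * (star x ⬝ᵥ x) + ((ε : ℝ) : ℂ) * (star x ⬝ᵥ C *ᵥ x) := by
      rw [Matrix.add_mulVec, Matrix.smul_mulVec, Matrix.smul_mulVec,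
        Matrix.one_mulVec, dotProduct_add, dotProduct_smul, dotProduct_smul]
      simp [smul_eq_mul]
    rw [hqf]
    set t : ℂ := star x ⬝ᵥ C *ᵥ x with ht
    set n : ℝ := ∑ i, Complex.normSq (x i) with hn
    have hx : star x ⬝ᵥ x = (n : ℂ) := by
      simp only [dotProduct, Pi.star_apply, hn, Complex.ofReal_sum]
      exact Finset.sum_congr rfl fun i _ => (Complex.normSq_eq_conj_mul_self).symm ▸ rfl
    have hnnn : 0 ≤ n := Finset.sum_nonneg fun i _ => Complex.normSq_nonneg _
    have htre : t.im = 0 := by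
      have := herm_qf_real C hC x
      rw [← ht] at this
      have h2 := congrArg Complex.im this
      simp only [Complex.conj_im] at h2
      linarith
    have htabs : |t.re| ≤ (∑ p, ∑ q, ‖C p q‖) * n := by
      calc |t.re| ≤ ‖t‖ := Complex.abs_re_le_norm t
        _ ≤ _ := qf_abs_le C x
    rw [hx, Complex.le_def]
    constructor
    · simp only [Complex.add_re, Complex.mul_re, Complex.ofReal_re, Complex.ofReal_im,
        Complex.zero_re]
      have h1 : |ε * t.re| ≤ 3⁻¹ * n := by
        rw [abs_mul]
        calc |ε| * |t.re| ≤ |ε| * ((∑ p, ∑ q, ‖C p q‖) * n) :=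
              mul_le_mul_of_nonneg_left htabs (abs_nonneg _)
          _ = (|ε| * (∑ p, ∑ q, ‖C p q‖)) * n := by ring
          _ ≤ 3⁻¹ * n := mul_le_mul_of_nonneg_right hbound hnnn
      have h2 := abs_le.mp h1
      nlinarith [h2.1, h2.2]
    · simp [Complex.add_im, Complex.mul_im, Complex.ofReal_im, htre]
end PSD

def Dmap : MatMap 3 :=
  ((3:ℂ)⁻¹) • (Matrix.traceLinearMap (Fin 3) ℂ ℂ).smulRight (1 : Matrix (Fin 3) (Fin 3) ℂ)

lemma Dmap_apply (X : Matrix (Fin 3) (Fin 3) ℂ) :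
    Dmap X = ((3:ℂ)⁻¹ * X.trace) • (1 : Matrix (Fin 3) (Fin 3) ℂ) := by
  simp [Dmap, LinearMap.smul_apply, LinearMap.smulRight_apply, Matrix.traceLinearMap,
    smul_smul]

lemma Dmap_one : Dmap 1 = 1 := by
  rw [Dmap_apply, Matrix.trace_one]
  norm_num

lemma Dmap_trace (X : Matrix (Fin 3) (Fin 3) ℂ) : (Dmap X).trace = X.trace := by
  rw [Dmap_apply, Matrix.trace_smul, Matrix.trace_one]
  simp [smul_eq_mul]
  ring

lemma trace_stdBasis (a c : Fin 3) :
    (Matrix.single a c (1:ℂ)).trace = if a = c then 1 else 0 := by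
  by_cases h : a = c
  · subst h; simp [Matrix.trace_single_eq_same]
  · rw [if_neg h]
    exact Matrix.trace_single_eq_of_ne (c := (1:ℂ)) (h := h)

lemma choi_Dmap : choi Dmap = (((3:ℝ)⁻¹ : ℝ) : ℂ) • (1 : Matrix (Fin 3 × Fin 3) (Fin 3 × Fin 3) ℂ) := by
  ext ⟨a, b⟩ ⟨c, d⟩
  simp only [choi, Matrix.of_apply, Dmap_apply, Matrix.smul_apply, Matrix.one_apply,
    trace_stdBasis, smul_eq_mul, Prod.mk.injEq]
  by_cases h1 : a = c <;> by_cases h2 : b = d <;> simp [h1, h2] <;> norm_num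

lemma choi_add (f g : MatMap 3) : choi (f + g) = choi f + choi g := by
  ext ⟨a, b⟩ ⟨c, d⟩
  simp [choi, LinearMap.add_apply, Matrix.add_apply]

lemma choi_smul (c : ℂ) (f : MatMap 3) : choi (c • f) = c • choi f := by
  ext ⟨a, b⟩ ⟨c', d⟩
  simp [choi, LinearMap.smul_apply, Matrix.smul_apply]

lemma choi_sub (f g : MatMap 3) : choi (f - g) = choi f - choi g := by
  ext ⟨a, b⟩ ⟨c, d⟩
  simp [choi, LinearMap.sub_apply, Matrix.sub_apply]

theorem stmt15 (Q R : MatMap 3) (hQ : IsChannel Q) (hR : IsChannel R)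
    (hI : Q 1 = R 1)
    (hfid : ∀ φ : Fin 3 → ℂ, unitv φ → fid Q φ = fid R φ) :
    ∃ r : ℝ, 0 ≤ r ∧ ∃ E Ed : MatMap 3, IsChannel E ∧ E 1 = 1 ∧ IsDual E Ed ∧
      R = Q + (r : ℂ) • (E - Ed) := by
  obtain ⟨Δ, hΔdef⟩ : ∃ Δ : MatMap 3, Δ = R - Q := ⟨_, rfl⟩
  -- fidelity for all φ
  have hfid' := fid_all_eq Q R hfid
  have hH : ∀ φ : Fin 3 → ℂ, L4 (fun a b c d => choi Δ (a, b) (c, d)) φ (star φ) (star φ) φ = 0 := by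
    intro φ
    have h4 : L4 (fun a b c d => choi Δ (a, b) (c, d)) φ (star φ) (star φ) φ
        = L4 (fun a b c d => choi R (a, b) (c, d)) φ (star φ) (star φ) φ
          - L4 (fun a b c d => choi Q (a, b) (c, d)) φ (star φ) (star φ) φ := by
      have hc : ∀ a b c d : Fin 3, choi Δ (a, b) (c, d) = choi R (a, b) (c, d) - choi Q (a, b) (c, d) := by
        intro a b c d
        rw [hΔdef]
        simp [choi, LinearMap.sub_apply, Matrix.sub_apply]
      simp only [L4, hc, Fin.sum_univ_three]
      ring
    rw [h4, ← fid_eq_L4, ← fid_eq_L4, hfid' φ]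
    ring
  have hC3 : ∀ w x y z : Fin 3, choi Δ (w, x) (y, z) + choi Δ (w, y) (x, z)
      + choi Δ (z, x) (y, w) + choi Δ (z, y) (x, w) = 0 := by
    intro w x y z
    exact extract _ hH w x y z
  have hC1 : ∀ p q : Fin 3, choi Δ (0, p) (0, q) + choi Δ (1, p) (1, q) + choi Δ (2, p) (2, q) = 0 := by
    intro p q
    have h0 : Δ 1 = 0 := by rw [hΔdef, LinearMap.sub_apply, hI, sub_self]
    have h1 := apply_entry Δ 1 p q
    rw [h0] at h1
    simp only [Matrix.zero_apply, Matrix.one_apply, Fin.sum_univ_three, Fin.reduceEq,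
      if_true, if_false, reduceIte, add_zero, zero_add, one_mul] at h1
    linear_combination -h1
  have hC2 : ∀ a c : Fin 3, choi Δ (a, 0) (c, 0) + choi Δ (a, 1) (c, 1) + choi Δ (a, 2) (c, 2) = 0 := by
    intro a c
    have h1 : (Δ (Matrix.single a c 1)).trace = 0 := by
      rw [hΔdef, LinearMap.sub_apply, Matrix.trace_sub, hR.2, hQ.2, sub_self]
    rw [Matrix.trace] at h1
    simp only [Matrix.diag_apply, Fin.sum_univ_three] at h1
    exact h1
  have hKey : ∀ a b c d : Fin 3, choi Δ (a, b) (c, d) + choi Δ (d, c) (b, a) = 0 := by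
    refine keyLemma (fun a b c d => choi Δ (a, b) (c, d) + choi Δ (d, c) (b, a)) ?_ ?_ ?_
    · intro a b c d
      show (choi Δ (a, b) (c, d) + choi Δ (d, c) (b, a))
        + (choi Δ (a, c) (b, d) + choi Δ (d, b) (c, a)) = 0
      linear_combination hC3 a b c d
    · intro a b c d
      show (choi Δ (a, b) (c, d) + choi Δ (d, c) (b, a))
        + (choi Δ (d, b) (c, a) + choi Δ (a, c) (b, d)) = 0
      linear_combination hC3 a b c d
    · intro p q
      show (choi Δ (0, p) (0, q) + choi Δ (q, 0) (p, 0))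
        + (choi Δ (1, p) (1, q) + choi Δ (q, 1) (p, 1))
        + (choi Δ (2, p) (2, q) + choi Δ (q, 2) (p, 2)) = 0
      linear_combination hC1 p q + hC2 q p
  -- the dual antisymmetry of Δ
  have hdualΔ : ∀ X Y : Matrix (Fin 3) (Fin 3) ℂ,
      (Δ X * Y).trace + (X * Δ Y).trace = 0 := by
    intro X Y
    have e1 : ∀ b d : Fin 3, (Δ X) b d = ∑ a, ∑ c, X a c * choi Δ (a, b) (c, d) :=
      fun b d => apply_entry Δ X b d
    have e2 : ∀ b d : Fin 3, (Δ Y) b d = ∑ a, ∑ c, Y a c * choi Δ (a, b) (c, d) :=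
      fun b d => apply_entry Δ Y b d
    rw [Matrix.trace, Matrix.trace]
    simp only [Matrix.diag_apply, Matrix.mul_apply, e1, e2, Fin.sum_univ_three]
    linear_combination X 0 0 * Y 0 0 * hKey 0 0 0 0 + X 0 0 * Y 1 0 * hKey 0 0 0 1 + X 0 0 * Y 2 0
        * hKey 0 0 0 2 + X 0 1 * Y 0 0 * hKey 0 0 1 0 + X 0 1 * Y 1 0 * hKey 0 0 1 1 + X 0 1 * Y 2 0 *
        hKey 0 0 1 2 + X 0 2 * Y 0 0 * hKey 0 0 2 0 + X 0 2 * Y 1 0 * hKey 0 0 2 1 + X 0 2 * Y 2 0 *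
        hKey 0 0 2 2 + X 0 0 * Y 0 1 * hKey 0 1 0 0 + X 0 0 * Y 1 1 * hKey 0 1 0 1 + X 0 0 * Y 2 1 *
        hKey 0 1 0 2 + X 0 1 * Y 0 1 * hKey 0 1 1 0 + X 0 1 * Y 1 1 * hKey 0 1 1 1 + X 0 1 * Y 2 1 *
        hKey 0 1 1 2 + X 0 2 * Y 0 1 * hKey 0 1 2 0 + X 0 2 * Y 1 1 * hKey 0 1 2 1 + X 0 2 * Y 2 1 *
        hKey 0 1 2 2 + X 0 0 * Y 0 2 * hKey 0 2 0 0 + X 0 0 * Y 1 2 * hKey 0 2 0 1 + X 0 0 * Y 2 2 *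
        hKey 0 2 0 2 + X 0 1 * Y 0 2 * hKey 0 2 1 0 + X 0 1 * Y 1 2 * hKey 0 2 1 1 + X 0 1 * Y 2 2 *
        hKey 0 2 1 2 + X 0 2 * Y 0 2 * hKey 0 2 2 0 + X 0 2 * Y 1 2 * hKey 0 2 2 1 + X 0 2 * Y 2 2 *
        hKey 0 2 2 2 + X 1 0 * Y 0 0 * hKey 1 0 0 0 + X 1 0 * Y 1 0 * hKey 1 0 0 1 + X 1 0 * Y 2 0 *
        hKey 1 0 0 2 + X 1 1 * Y 0 0 * hKey 1 0 1 0 + X 1 1 * Y 1 0 * hKey 1 0 1 1 + X 1 1 * Y 2 0 *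
        hKey 1 0 1 2 + X 1 2 * Y 0 0 * hKey 1 0 2 0 + X 1 2 * Y 1 0 * hKey 1 0 2 1 + X 1 2 * Y 2 0 *
        hKey 1 0 2 2 + X 1 0 * Y 0 1 * hKey 1 1 0 0 + X 1 0 * Y 1 1 * hKey 1 1 0 1 + X 1 0 * Y 2 1 *
        hKey 1 1 0 2 + X 1 1 * Y 0 1 * hKey 1 1 1 0 + X 1 1 * Y 1 1 * hKey 1 1 1 1 + X 1 1 * Y 2 1 *
        hKey 1 1 1 2 + X 1 2 * Y 0 1 * hKey 1 1 2 0 + X 1 2 * Y 1 1 * hKey 1 1 2 1 + X 1 2 * Y 2 1 *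
        hKey 1 1 2 2 + X 1 0 * Y 0 2 * hKey 1 2 0 0 + X 1 0 * Y 1 2 * hKey 1 2 0 1 + X 1 0 * Y 2 2 *
        hKey 1 2 0 2 + X 1 1 * Y 0 2 * hKey 1 2 1 0 + X 1 1 * Y 1 2 * hKey 1 2 1 1 + X 1 1 * Y 2 2 *
        hKey 1 2 1 2 + X 1 2 * Y 0 2 * hKey 1 2 2 0 + X 1 2 * Y 1 2 * hKey 1 2 2 1 + X 1 2 * Y 2 2 *
        hKey 1 2 2 2 + X 2 0 * Y 0 0 * hKey 2 0 0 0 + X 2 0 * Y 1 0 * hKey 2 0 0 1 + X 2 0 * Y 2 0 *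
        hKey 2 0 0 2 + X 2 1 * Y 0 0 * hKey 2 0 1 0 + X 2 1 * Y 1 0 * hKey 2 0 1 1 + X 2 1 * Y 2 0 *
        hKey 2 0 1 2 + X 2 2 * Y 0 0 * hKey 2 0 2 0 + X 2 2 * Y 1 0 * hKey 2 0 2 1 + X 2 2 * Y 2 0 *
        hKey 2 0 2 2 + X 2 0 * Y 0 1 * hKey 2 1 0 0 + X 2 0 * Y 1 1 * hKey 2 1 0 1 + X 2 0 * Y 2 1 *
        hKey 2 1 0 2 + X 2 1 * Y 0 1 * hKey 2 1 1 0 + X 2 1 * Y 1 1 * hKey 2 1 1 1 + X 2 1 * Y 2 1 *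
        hKey 2 1 1 2 + X 2 2 * Y 0 1 * hKey 2 1 2 0 + X 2 2 * Y 1 1 * hKey 2 1 2 1 + X 2 2 * Y 2 1 *
        hKey 2 1 2 2 + X 2 0 * Y 0 2 * hKey 2 2 0 0 + X 2 0 * Y 1 2 * hKey 2 2 0 1 + X 2 0 * Y 2 2 *
        hKey 2 2 0 2 + X 2 1 * Y 0 2 * hKey 2 2 1 0 + X 2 1 * Y 1 2 * hKey 2 2 1 1 + X 2 1 * Y 2 2 *
        hKey 2 2 1 2 + X 2 2 * Y 0 2 * hKey 2 2 2 0 + X 2 2 * Y 1 2 * hKey 2 2 2 1 + X 2 2 * Y 2 2 *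
        hKey 2 2 2 2
  -- hermiticity of choi Δ
  have hchoisub : choi Δ = choi R - choi Q := by
    rw [hΔdef, choi_sub]
  have hherm : (choi Δ).IsHermitian := by
    rw [hchoisub]
    exact hR.1.1.sub hQ.1.1
  -- the constant
  obtain ⟨K, hKdef⟩ : ∃ K : ℝ, K = ∑ p : Fin 3 × Fin 3, ∑ q : Fin 3 × Fin 3,
      ‖choi Δ p q‖ := ⟨_, rfl⟩
  have hK0 : 0 ≤ K := by
    rw [hKdef]
    exact Finset.sum_nonneg fun p _ => Finset.sum_nonneg fun q _ => norm_nonneg _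
  obtain ⟨r, hrdef⟩ : ∃ r : ℝ, r = 3/2 * K + 1 := ⟨_, rfl⟩
  have hrpos : 0 < r := by rw [hrdef]; nlinarith
  obtain ⟨ε, hεdef⟩ : ∃ ε : ℝ, ε = (2*r)⁻¹ := ⟨_, rfl⟩
  have hεpos : 0 < ε := by rw [hεdef]; positivity
  have hbound : |ε| * (∑ p : Fin 3 × Fin 3, ∑ q : Fin 3 × Fin 3, ‖choi Δ p q‖) ≤ 3⁻¹ := by
    rw [abs_of_pos hεpos, ← hKdef, hεdef, hrdef]
    rw [inv_mul_le_iff₀ (by nlinarith)]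
    nlinarith
  obtain ⟨E, hEdef⟩ : ∃ E : MatMap 3, E = Dmap + ((ε : ℝ) : ℂ) • Δ := ⟨_, rfl⟩
  obtain ⟨Ed, hEddef⟩ : ∃ Ed : MatMap 3, Ed = Dmap - ((ε : ℝ) : ℂ) • Δ := ⟨_, rfl⟩
  have hΔtr : ∀ X : Matrix (Fin 3) (Fin 3) ℂ, (Δ X).trace = 0 := by
    intro X
    rw [hΔdef, LinearMap.sub_apply, Matrix.trace_sub, hR.2, hQ.2, sub_self]
  have hΔ1 : Δ 1 = 0 := by rw [hΔdef, LinearMap.sub_apply, hI, sub_self]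
  refine ⟨r, hrpos.le, E, Ed, ⟨?_, ?_⟩, ?_, ?_, ?_⟩
  · -- CP
    show (choi E).PosSemidef
    have hchoiE : choi E = (((3:ℝ)⁻¹ : ℝ) : ℂ) • (1 : Matrix (Fin 3 × Fin 3) (Fin 3 × Fin 3) ℂ)
        + ((ε : ℝ) : ℂ) • choi Δ := by
      rw [hEdef, choi_add, choi_smul, choi_Dmap]
    rw [hchoiE]
    exact psd_shift (choi Δ) hherm ε hbound
  · -- TP
    intro X
    rw [hEdef, LinearMap.add_apply, LinearMap.smul_apply, Matrix.trace_add, Matrix.trace_smul,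
      Dmap_trace, hΔtr, smul_zero, add_zero]
  · -- unital
    rw [hEdef, LinearMap.add_apply, LinearMap.smul_apply, hΔ1, smul_zero, add_zero, Dmap_one]
  · -- dual
    intro X Y
    have hdd : (Dmap X * Y).trace = (X * Dmap Y).trace := by
      rw [Dmap_apply, Dmap_apply, Matrix.smul_mul, Matrix.mul_smul, Matrix.trace_smul,
        Matrix.trace_smul, Matrix.one_mul, Matrix.mul_one, smul_eq_mul, smul_eq_mul]
      ring
    rw [hEdef, hEddef, LinearMap.add_apply, LinearMap.sub_apply, LinearMap.smul_apply,
      LinearMap.smul_apply, Matrix.add_mul, Matrix.mul_sub, Matrix.trace_add, Matrix.trace_sub,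
      Matrix.smul_mul, Matrix.mul_smul, Matrix.trace_smul, Matrix.trace_smul, smul_eq_mul,
      smul_eq_mul]
    linear_combination hdd + ((ε : ℝ) : ℂ) * hdualΔ X Y
  · -- the equation
    have hscal : ((r : ℝ) : ℂ) * (((ε : ℝ) : ℂ) + ((ε : ℝ) : ℂ)) = 1 := by
      rw [hεdef]
      push_cast
      have hr0 : ((r : ℝ) : ℂ) ≠ 0 := Complex.ofReal_ne_zero.mpr hrpos.ne'
      field_simp
      ring
    have h1 : E - Ed = (((ε : ℝ) : ℂ) + ((ε : ℝ) : ℂ)) • Δ := by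
      rw [hEdef, hEddef]
      ext X : 1
      simp only [LinearMap.sub_apply, LinearMap.add_apply, LinearMap.smul_apply, add_smul]
      abel
    rw [h1, smul_smul, hscal, one_smul, hΔdef]
    abel
end
end

section
/- There exist quantum channels Q, R: L(H_3) → L(H_3) with equal gate fidelity such that R ≠ Q + r(E − E†) for every r ≥ 0 and every unital quantum channel E. (Concretely, one may take Q unital and R non-unital with P_S(T ⊗ id_3)(C_Q − C_R)P_S = 0.) -/
open Matrix BigOperators
open scoped ComplexOrder

noncomputable section

namespace Stmt16Aux

def e (i j : Fin 3) : Matrix (Fin 3) (Fin 3) ℂ := Matrix.single i j 1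

def Qc : MatMap 3 where
  toFun X := (X.trace * (1/3 : ℂ)) • (1 : Matrix (Fin 3) (Fin 3) ℂ)
  map_add' X Y := by simp [add_mul, add_smul]
  map_smul' c X := by simp [smul_smul, mul_assoc]

def Rx : MatMap 3 where
  toFun X := X 0 0 • ((1/6:ℂ) • (e 1 2 + e 2 1)) + X 0 1 • (-(1/6:ℂ) • e 0 2)
      + X 1 0 • (-(1/6:ℂ) • e 2 0)
  map_add' X Y := by simp only [Matrix.add_apply, add_smul]; module
  map_smul' c X := by
    simp only [Matrix.smul_apply, smul_eq_mul, mul_smul, RingHom.id_apply]; module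

lemma trace_e (i j : Fin 3) : (e i j).trace = if i = j then 1 else 0 := by
  fin_cases i <;> fin_cases j <;>
    simp [e, Matrix.trace, Matrix.diag, Matrix.single, Fin.sum_univ_three,
      Matrix.of_apply] <;> decide

lemma choi_add (L M : MatMap 3) : choi (L + M) = choi L + choi M := by
  ext p q; simp [choi]

lemma choi_Qc : choi Qc = Matrix.diagonal (fun _ => (1/3 : ℂ)) := by
  ext ⟨i, a⟩ ⟨j, b⟩
  simp only [choi, Matrix.of_apply, Qc, LinearMap.coe_mk, AddHom.coe_mk, Matrix.smul_apply,
    Matrix.one_apply, Matrix.diagonal_apply, smul_eq_mul]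
  rw [show Matrix.single i j (1:ℂ) = e i j from rfl, trace_e]
  by_cases hij : i = j <;> by_cases hab : a = b <;> simp [hij, hab, Prod.ext_iff]

def CD : Matrix (Fin 3 × Fin 3) (Fin 3 × Fin 3) ℂ :=
  (1/6:ℂ) • (Matrix.single ((0:Fin 3),(1:Fin 3)) ((0:Fin 3),(2:Fin 3)) 1
    + Matrix.single ((0:Fin 3),(2:Fin 3)) ((0:Fin 3),(1:Fin 3)) 1
    - Matrix.single ((0:Fin 3),(0:Fin 3)) ((1:Fin 3),(2:Fin 3)) 1
    - Matrix.single ((1:Fin 3),(2:Fin 3)) ((0:Fin 3),(0:Fin 3)) 1)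

lemma choi_Rx : choi Rx = CD := by
  ext ⟨i, a⟩ ⟨j, b⟩
  fin_cases i <;> fin_cases j <;>
    simp [choi, Rx, CD, e, Matrix.single, Prod.ext_iff, and_assoc, and_comm, eq_comm,
      mul_add, mul_ite]

lemma c16 : (0:ℂ) ≤ (1/6 : ℂ) := by rw [Complex.le_def]; norm_num
lemma c13 : (0:ℂ) ≤ (1/3 : ℂ) := by rw [Complex.le_def]; norm_num

lemma dp_sb {m : Type*} [Fintype m] [DecidableEq m] (p q : m) (x : m → ℂ) :
    dotProduct (star x) (Matrix.single p q (1:ℂ) *ᵥ x) = star (x p) * x q := by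
  simp [dotProduct, Matrix.mulVec, Matrix.single, ite_and, Finset.mul_sum,
    Finset.sum_ite_eq, Finset.sum_ite_eq']

lemma psd_choiR : (choi (Qc + Rx)).PosSemidef := by
  rw [choi_add, choi_Qc, choi_Rx]
  refine Matrix.PosSemidef.of_dotProduct_mulVec_nonneg ?_ ?_
  · ext ⟨i, a⟩ ⟨j, b⟩
    fin_cases i <;> fin_cases j <;>
      simp [CD, Matrix.single, Matrix.diagonal_apply, Prod.ext_iff,
        apply_ite (starRingEnd ℂ), eq_comm, and_comm, map_ofNat] <;> split_ifs <;> norm_num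
  · intro x
    have key : dotProduct (star x)
        ((Matrix.diagonal (fun _ => (1/3:ℂ)) + CD) *ᵥ x) =
        (1/6) * (star (x (0,1) + x (0,2)) * (x (0,1) + x (0,2)))
        + (1/6) * (star (x (0,0) - x (1,2)) * (x (0,0) - x (1,2)))
        + (1/6) * (star (x (0,1)) * x (0,1)) + (1/6) * (star (x (0,2)) * x (0,2))
        + (1/6) * (star (x (0,0)) * x (0,0)) + (1/6) * (star (x (1,2)) * x (1,2))
        + (1/3) * (star (x (1,0)) * x (1,0)) + (1/3) * (star (x (1,1)) * x (1,1))
        + (1/3) * (star (x (2,0)) * x (2,0)) + (1/3) * (star (x (2,1)) * x (2,1))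
        + (1/3) * (star (x (2,2)) * x (2,2)) := by
      simp only [CD, Matrix.add_mulVec, Matrix.sub_mulVec, Matrix.smul_mulVec,
        dotProduct_add, dotProduct_smul, dotProduct_sub, dotProduct_neg, Matrix.neg_mulVec,
        dp_sb, smul_eq_mul]
      simp only [dotProduct, Matrix.mulVec_diagonal, Fintype.sum_prod_type,
        Fin.sum_univ_three, Pi.star_apply, star_add, star_sub]
      ring
    rw [key]
    have h6 := c16; have h3 := c13
    repeat' apply add_nonneg
    all_goals exact mul_nonneg (by assumption) (star_mul_self_nonneg _)

lemma psd_choiQ : (choi Qc).PosSemidef := by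
  rw [choi_Qc]
  exact Matrix.PosSemidef.diagonal (fun _ => c13)

lemma tp_Qc : IsTP Qc := by
  intro X
  simp [Qc, Matrix.trace_smul, Matrix.trace_one]

lemma trace_Rx (X : Matrix (Fin 3) (Fin 3) ℂ) : (Rx X).trace = 0 := by
  simp [Rx, Matrix.trace_add, Matrix.trace_smul, trace_e]

lemma tp_R : IsTP (Qc + Rx) := by
  intro X
  rw [LinearMap.add_apply, Matrix.trace_add, trace_Rx, add_zero]
  exact tp_Qc X

lemma fid_eq (φ : Fin 3 → ℂ) : fid (Qc + Rx) φ = fid Qc φ := by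
  unfold fid qf
  rw [LinearMap.add_apply, Matrix.add_mulVec, dotProduct_add]
  have h : star φ ⬝ᵥ (Rx (ketbra φ) *ᵥ φ) = 0 := by
    simp only [Rx, LinearMap.coe_mk, AddHom.coe_mk, e, Matrix.add_mulVec,
      Matrix.smul_mulVec, dotProduct_add, dotProduct_smul, dp_sb, smul_eq_mul,
      Matrix.neg_mulVec, dotProduct_neg, ketbra, Matrix.vecMulVec_apply,
      Pi.star_apply]
    ring
  rw [h, add_zero]

lemma tr_sb_mul (j i : Fin 3) (M : Matrix (Fin 3) (Fin 3) ℂ) :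
    (Matrix.single j i (1:ℂ) * M).trace = M i j := by
  simp [Matrix.trace, Matrix.diag, Matrix.mul_apply, Matrix.single, ite_and,
    boole_mul, Finset.sum_ite_eq, Finset.sum_ite_eq']

end Stmt16Aux

open Stmt16Aux in
theorem stmt16 :
    ∃ Q R : MatMap 3, IsChannel Q ∧ IsChannel R ∧
      (∀ φ : Fin 3 → ℂ, unitv φ → fid Q φ = fid R φ) ∧
      ¬ ∃ r : ℝ, 0 ≤ r ∧ ∃ E Ed : MatMap 3, IsChannel E ∧ E 1 = 1 ∧ IsDual E Ed ∧
        R = Q + (r : ℂ) • (E - Ed) := by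
  refine ⟨Qc, Qc + Rx, ⟨psd_choiQ, tp_Qc⟩, ⟨psd_choiR, tp_R⟩,
    fun φ _ => (fid_eq φ).symm, ?_⟩
  rintro ⟨r, hr, E, Ed, ⟨hEcp, hEtp⟩, hE1, hdual, heq⟩
  have hEd1 : Ed 1 = 1 := by
    ext i j
    have h1 := hdual (Matrix.single j i 1) 1
    rw [mul_one, hEtp, tr_sb_mul] at h1
    rw [← h1, show Matrix.single j i (1:ℂ) = e j i from rfl, trace_e,
      Matrix.one_apply]
    by_cases h : i = j <;> simp [h, eq_comm]
  have h12 := congrArg (fun f : MatMap 3 => f 1 1 2) heq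
  simp only [LinearMap.add_apply, LinearMap.smul_apply, LinearMap.sub_apply, hE1, hEd1,
    sub_self, smul_zero, Matrix.add_apply, Matrix.zero_apply, add_zero] at h12
  have hx : (Rx 1) 1 2 = 1/6 := by
    simp [Rx, e, Matrix.single, Matrix.one_apply]
  rw [hx] at h12
  norm_num at h12
end
end
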